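/- arXiv:2109.10096 — 4 statements merged into one kernel-verified Lean document; each statement's English description precedes it below -/
import Mathlib

section
/- Let Δ ∈ ℝ^{n×n} be symmetric with orthonormal eigenbasis x¹,…,xⁿ ∈ ℝⁿ and corresponding eigenvalues λ¹,…,λⁿ, and let A = nΔ. Then for every i = 1,…,n one has T_{W_A}(√n·ψ_{xⁱ}) = λⁱ·(√n·ψ_{xⁱ}), the functions √n·ψ_{x¹},…,√n·ψ_{xⁿ} are orthonormal in L²[0,1], and every f ∈ L²[0,1] that is orthogonal to all of them satisfies T_{W_A} f = 0. In particular, the nonzero spectrum of T_{W_A} consists exactly of the nonzero eigenvalues of Δ. -/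
open MeasureTheory Filter

noncomputable section

/-- Lebesgue measure restricted to `[0,1]`. -/
abbrev μ01 : Measure ℝ := volume.restrict (Set.Icc 0 1)

instance : IsFiniteMeasure μ01 := by
  constructor
  rw [Measure.restrict_apply_univ, Real.volume_Icc]
  exact ENNReal.ofReal_lt_top

/-- The space `L²[0,1]` (complex valued). -/
abbrev L2 := Lp ℂ 2 μ01

/-- The `j`-th interval `P_j = [j/n, (j+1)/n)` of the standard partition of `[0,1]`
(0-indexed version of `[(j-1)/n, j/n)`). -/
def part (n : ℕ) (j : Fin n) : Set ℝ := Set.Ico ((j : ℝ) / n) (((j : ℝ) + 1) / n)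

lemma part_meas (n : ℕ) (j : Fin n) : MeasurableSet (part n j) := measurableSet_Ico

lemma part_ne_top (n : ℕ) (j : Fin n) : μ01 (part n j) ≠ ⊤ := (measure_lt_top _ _).ne

/-- The graphon `W_B` induced by an `n × n` matrix `B`:
`W_B(u,v) = ∑_{i,j} B i j · 1_{P_i}(u) · 1_{P_j}(v)`. -/
def inducedGraphon {n : ℕ} (B : Matrix (Fin n) (Fin n) ℝ) : ℝ → ℝ → ℝ :=
  fun u v => ∑ i, ∑ j, B i j * (part n i).indicator 1 u * (part n j).indicator 1 v

/-- The graphon signal `ψ_x = ∑_j x_j · 1_{P_j} ∈ L²[0,1]` induced by `x ∈ ℂⁿ`. -/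
def inducedSignal {n : ℕ} (x : Fin n → ℂ) : L2 :=
  ∑ j, indicatorConstLp 2 (part_meas n j) (part_ne_top n j) (x j)

/-- `W` is a graphon: bounded, symmetric and measurable `[0,1]² → ℝ`
(realized as a function on all of `ℝ²`; only its values matter w.r.t. `μ01`). -/
structure IsGraphon (W : ℝ → ℝ → ℝ) : Prop where
  symm : ∀ u v, W u v = W v u
  meas : Measurable (Function.uncurry W)
  bdd : ∃ C, ∀ u v, |W u v| ≤ C

/-- `T` is the graphon shift operator of `W`: `(T f)(v) = ∫₀¹ W(v,u) f(u) du`. -/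
def IsGRSO (W : ℝ → ℝ → ℝ) (T : L2 →L[ℂ] L2) : Prop :=
  ∀ f : L2, ∀ᵐ v ∂μ01, T f v = ∫ u, (W v u : ℂ) * f u ∂μ01

/-- Entrywise complexification of a real activation function. -/
def rhoC (ρ : ℝ → ℝ) (z : ℂ) : ℂ := (ρ z.re : ℂ) + (ρ z.im : ℂ) * Complex.I

/-- The realization of an SCNN (filters `filt`, weights `wt`, activation `ρ`) on a graph with
GSO `Δ`: `graphNet F filt wt ρ Δ x l j` is the `j`-th feature of the `l`-th layer, on input
feature map `x`.  Layer `l+1` is obtained from layer `l` via the filters `filt l j k`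
and weights `wt l j k`. -/
def graphNet (F : ℕ → ℕ) (filt : ℕ → ℕ → ℕ → ℝ → ℝ) (wt : ℕ → ℕ → ℕ → ℝ)
    (ρ : ℝ → ℝ) {n : ℕ} (Δ : Matrix (Fin n) (Fin n) ℝ) (x : ℕ → Fin n → ℂ) :
    ℕ → ℕ → Fin n → ℂ
  | 0, j => x j
  | (l + 1), j => fun v =>
      rhoC ρ (∑ k ∈ Finset.range (F l),
        (wt l j k : ℂ) * (((cfc (filt l j k) Δ).map Complex.ofReal).mulVec
          (graphNet F filt wt ρ Δ x l k)) v)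

instance : ContinuousFunctionalCalculus ℝ (L2 →L[ℂ] L2) IsSelfAdjoint :=
  IsSelfAdjoint.instContinuousFunctionalCalculus

/-- `y` is a realization of the SCNN (filters `filt`, weights `wt`, activation `ρ`,
`Lnum` layers, feature dimensions `F`) on the graphon shift operator `T`:
`y l j` is the `j`-th feature of the `l`-th layer, and each layer is obtained from the
previous one by filtering with `cfc (filt l j k) T`, taking weighted sums, and applying
the activation pointwise almost everywhere. -/
def IsGraphonNet (Lnum : ℕ) (F : ℕ → ℕ) (filt : ℕ → ℕ → ℕ → ℝ → ℝ) (wt : ℕ → ℕ → ℕ → ℝ)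
    (ρ : ℝ → ℝ) (T : L2 →L[ℂ] L2) (y : ℕ → ℕ → L2) : Prop :=
  ∀ l < Lnum, ∀ j < F (l + 1),
    ⇑(y (l + 1) j) =ᵐ[μ01]
      fun v => rhoC ρ
        (((∑ k ∈ Finset.range (F l),
          (wt l j k : ℂ) • (cfc (filt l j k) T) (y l k) : L2) : ℝ → ℂ) v)

/-! ### Auxiliary lemmas -/

section Aux

lemma part_subset (n : ℕ) (j : Fin n) : part n j ⊆ Set.Icc 0 1 := by
  have hn : (0:ℝ) < n := by exact_mod_cast j.pos
  rintro v ⟨h1, h2⟩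
  refine ⟨le_trans (by positivity) h1, ?_⟩
  have h3 : ((j:ℝ)+1)/n ≤ 1 := by
    rw [div_le_one hn]
    exact_mod_cast Nat.succ_le_of_lt j.isLt
  exact le_of_lt (lt_of_lt_of_le h2 h3)

lemma measure_part (n : ℕ) (j : Fin n) : μ01 (part n j) = ENNReal.ofReal (1/n) := by
  rw [Measure.restrict_apply (part_meas n j),
    Set.inter_eq_self_of_subset_left (part_subset n j)]
  rw [part, Real.volume_Ico]
  congr 1
  have hn : (0:ℝ) < n := by exact_mod_cast j.pos
  field_simp
  ring

lemma measure_part_toReal (n : ℕ) (j : Fin n) : (μ01 (part n j)).toReal = 1/n := by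
  rw [measure_part]
  exact ENNReal.toReal_ofReal (by positivity)

lemma part_disj (n : ℕ) {j k : Fin n} (h : j ≠ k) : part n j ∩ part n k = ∅ := by
  have hn : (0:ℝ) < n := by exact_mod_cast j.pos
  apply Set.eq_empty_iff_forall_notMem.mpr
  rintro v ⟨⟨h1, h2⟩, h3, h4⟩
  rcases lt_or_gt_of_ne h with hlt | hlt
  · have hc : ((j:ℝ)+1) ≤ k := by exact_mod_cast Nat.succ_le_of_lt hlt
    have := ((div_le_div_iff_of_pos_right hn).mpr hc).trans h3
    exact absurd (h2.trans_le this) (lt_irrefl v)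
  · have hc : ((k:ℝ)+1) ≤ j := by exact_mod_cast Nat.succ_le_of_lt hlt
    have := ((div_le_div_iff_of_pos_right hn).mpr hc).trans h1
    exact absurd (h4.trans_le this) (lt_irrefl v)

lemma coeFn_finset_sum {ι : Type*} (s : Finset ι) (f : ι → L2) :
    ⇑(∑ i ∈ s, f i) =ᵐ[μ01] fun v => ∑ i ∈ s, f i v := by
  classical
  induction s using Finset.induction_on with
  | empty =>
    simp only [Finset.sum_empty]
    exact Lp.coeFn_zero (E := ℂ) (p := 2) (μ := μ01)
  | insert _ _ hnot ih =>
    rw [Finset.sum_insert hnot]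
    filter_upwards [Lp.coeFn_add _ (∑ i ∈ _, f i), ih] with v h1 h2
    rw [h1, Pi.add_apply, h2]
    simp [Finset.sum_insert hnot]

lemma sig_coe {n : ℕ} (y : Fin n → ℂ) :
    ⇑(inducedSignal y) =ᵐ[μ01]
      fun v => ∑ j, (part n j).indicator (fun _ => y j) v := by
  have h := coeFn_finset_sum Finset.univ
    (fun j => indicatorConstLp 2 (part_meas n j) (part_ne_top n j) (y j))
  have h2 : ∀ᵐ v ∂μ01, ∀ j : Fin n,
      indicatorConstLp 2 (part_meas n j) (part_ne_top n j) (y j) v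
        = (part n j).indicator (fun _ => y j) v :=
    ae_all_iff.mpr fun j => indicatorConstLp_coeFn
  filter_upwards [h, h2] with v hv hv2
  rw [inducedSignal, hv]
  exact Finset.sum_congr rfl fun j _ => hv2 j

lemma setIntegral_sig {n : ℕ} (y : Fin n → ℂ) (j : Fin n) :
    ∫ v in part n j, (inducedSignal y : ℝ → ℂ) v ∂μ01 = y j / n := by
  rw [integral_congr_ae (ae_restrict_of_ae (sig_coe y))]
  rw [integral_finset_sum _ (fun k _ =>
    ((integrable_const (y k)).indicator (part_meas n k)).restrict)]
  have : ∀ k : Fin n, ∫ v in part n j, (part n k).indicator (fun _ => y k) v ∂μ01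
      = if k = j then y j / n else 0 := by
    intro k
    rw [setIntegral_indicator (part_meas n k)]
    by_cases hk : k = j
    · subst hk
      rw [if_pos rfl, Set.inter_self, setIntegral_const, measureReal_def, measure_part_toReal]
      rw [Complex.real_smul]
      push_cast
      ring
    · rw [if_neg hk, part_disj n (Ne.symm hk)]
      simp
  rw [Finset.sum_congr rfl fun k _ => this k]
  simp

lemma inner_sig {n : ℕ} (y : Fin n → ℂ) (f : L2) :
    (inner ℂ (inducedSignal y) f : ℂ)
      = ∑ j, (starRingEnd ℂ) (y j) * ∫ v in part n j, f v ∂μ01 := by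
  rw [inducedSignal, sum_inner]
  refine Finset.sum_congr rfl fun j _ => ?_
  rw [L2.inner_indicatorConstLp_eq_inner_setIntegral ℂ (part_meas n j) (part_ne_top n j)
    (y j) f, RCLike.inner_apply']

lemma sig_smul {n : ℕ} (a : ℂ) (y : Fin n → ℂ) :
    a • inducedSignal y = inducedSignal (fun j => a * y j) := by
  apply Lp.ext
  filter_upwards [Lp.coeFn_smul a (inducedSignal y), sig_coe y,
    sig_coe (fun j => a * y j)] with v h1 h2 h3
  rw [h1, Pi.smul_apply, h2, h3, smul_eq_mul, Finset.mul_sum]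
  refine Finset.sum_congr rfl fun j _ => ?_
  by_cases hv : v ∈ part n j <;> simp [Set.indicator, hv]

lemma sig_zero {n : ℕ} : inducedSignal (fun _ : Fin n => (0 : ℂ)) = 0 := by
  apply Lp.ext
  filter_upwards [sig_coe (fun _ : Fin n => (0:ℂ)),
    Lp.coeFn_zero (E := ℂ) (p := 2) (μ := μ01)] with v h1 h2
  rw [h1, h2]
  simp

lemma sig_add {n : ℕ} (y y' : Fin n → ℂ) :
    inducedSignal y + inducedSignal y' = inducedSignal (fun j => y j + y' j) := by
  apply Lp.ext
  filter_upwards [Lp.coeFn_add (inducedSignal y) (inducedSignal y'), sig_coe y,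
    sig_coe y', sig_coe (fun j => y j + y' j)] with v h1 h2 h3 h4
  rw [h1, Pi.add_apply, h2, h3, h4, ← Finset.sum_add_distrib]
  refine Finset.sum_congr rfl fun j _ => ?_
  by_cases hv : v ∈ part n j <;> simp [Set.indicator, hv]

lemma sig_sum {n : ℕ} {ι : Type*} (s : Finset ι) (y : ι → Fin n → ℂ) :
    ∑ i ∈ s, inducedSignal (y i) = inducedSignal (fun j => ∑ i ∈ s, y i j) := by
  classical
  induction s using Finset.induction_on with
  | empty => simpa using sig_zero.symm
  | insert _ _ hnot ih =>
    rw [Finset.sum_insert hnot, ih, sig_add]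
    simp [Finset.sum_insert hnot]

/-- The key computation: the graphon shift operator of the induced graphon maps any `f`
to an induced signal whose coefficients are given by the matrix acting on the local
averages of `f`. -/
lemma grso_apply {n : ℕ} (Δ : Matrix (Fin n) (Fin n) ℝ) (T : L2 →L[ℂ] L2)
    (hT : IsGRSO (inducedGraphon ((n : ℝ) • Δ)) T) (f : L2) :
    T f = inducedSignal (fun i =>
      (n : ℂ) * ∑ k, (Δ i k : ℂ) * ∫ u in part n k, f u ∂μ01) := by
  apply Lp.ext
  have hfint : Integrable (⇑f) μ01 := MemLp.integrable one_le_two (Lp.memLp f)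
  filter_upwards [hT f, sig_coe (fun i =>
      (n : ℂ) * ∑ k, (Δ i k : ℂ) * ∫ u in part n k, f u ∂μ01)] with v hv hv2
  rw [hv, hv2]
  have hint : ∀ (i k : Fin n), Integrable (fun u =>
      ((((n:ℝ) • Δ) i k : ℝ) * (part n i).indicator 1 v : ℂ)
        * (part n k).indicator (⇑f) u) μ01 :=
    fun i k => (hfint.indicator (part_meas n k)).const_mul _
  have hW : ∀ u : ℝ, ((inducedGraphon ((n : ℝ) • Δ) v u : ℝ) : ℂ) * f u
      = ∑ i, ∑ k, (((((n:ℝ) • Δ) i k : ℝ) * (part n i).indicator 1 v : ℂ)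
          * (part n k).indicator (⇑f) u) := by
    intro u
    rw [inducedGraphon]
    push_cast
    rw [Finset.sum_mul]
    refine Finset.sum_congr rfl fun i _ => ?_
    rw [Finset.sum_mul]
    refine Finset.sum_congr rfl fun k _ => ?_
    by_cases hu : u ∈ part n k <;>
      by_cases hv' : v ∈ part n i <;>
      simp [Set.indicator, hu, hv']
  calc ∫ u, ((inducedGraphon ((n : ℝ) • Δ) v u : ℝ) : ℂ) * f u ∂μ01
      = ∑ i, ∑ k, ∫ u, ((((n:ℝ) • Δ) i k : ℝ) * (part n i).indicator 1 v : ℂ)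
          * (part n k).indicator (⇑f) u ∂μ01 := by
        rw [integral_congr_ae (Eventually.of_forall hW),
          integral_finset_sum _ (fun i _ => integrable_finset_sum _ (fun k _ => hint i k))]
        exact Finset.sum_congr rfl fun i _ => integral_finset_sum _ (fun k _ => hint i k)
    _ = ∑ i, (part n i).indicator
          (fun _ => (n : ℂ) * ∑ k, (Δ i k : ℂ) * ∫ u in part n k, f u ∂μ01) v := by
        refine Finset.sum_congr rfl fun i _ => ?_
        have : ∀ k : Fin n, ∫ u, ((((n:ℝ) • Δ) i k : ℝ) * (part n i).indicator 1 v : ℂ)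
            * (part n k).indicator (⇑f) u ∂μ01
            = ((((n:ℝ) • Δ) i k : ℝ) * (part n i).indicator 1 v : ℂ)
              * ∫ u in part n k, f u ∂μ01 := by
          intro k
          rw [integral_const_mul, integral_indicator (part_meas n k)]
        rw [Finset.sum_congr rfl fun k _ => this k]
        by_cases hv' : v ∈ part n i
        · simp only [Set.indicator, hv', if_true, Finset.mul_sum]
          refine Finset.sum_congr rfl fun k _ => ?_
          simp only [Matrix.smul_apply, smul_eq_mul, Pi.one_apply]
          push_cast
          ring
        · simp [Set.indicator, hv']

end Aux

/-- The (normalized) eigen-signals `√n·ψ_{xⁱ}`. -/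
def phi (n : ℕ) (x : Fin n → Fin n → ℝ) (i : Fin n) : L2 :=
  (Real.sqrt n : ℂ) • inducedSignal (fun j => (x i j : ℂ))

section Main

variable {n : ℕ} {Δ : Matrix (Fin n) (Fin n) ℝ} {x : Fin n → Fin n → ℝ} {lam : Fin n → ℝ}
  {T : L2 →L[ℂ] L2}

lemma sqrt_mul_self_complex (n : ℕ) :
    (Real.sqrt n : ℂ) * (Real.sqrt n : ℂ) = (n : ℂ) := by
  rw [← Complex.ofReal_mul, Real.mul_self_sqrt (by positivity)]
  norm_cast

lemma setIntegral_phi (i k : Fin n) :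
    ∫ u in part n k, (phi n x i : ℝ → ℂ) u ∂μ01
      = (Real.sqrt n : ℂ) * ((x i k : ℂ) / n) := by
  have h : ⇑(phi n x i) =ᵐ[μ01]
      (Real.sqrt n : ℂ) • ⇑(inducedSignal fun j => (x i j : ℂ)) :=
    Lp.coeFn_smul _ _
  rw [integral_congr_ae (ae_restrict_of_ae h)]
  simp only [Pi.smul_apply, smul_eq_mul]
  rw [integral_const_mul, setIntegral_sig]

lemma mulVec_entry (heig : ∀ i, Δ.mulVec (x i) = lam i • x i) (i p : Fin n) :
    ∑ k, Δ p k * x i k = lam i * x i p := by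
  have := congrFun (heig i) p
  simpa [Matrix.mulVec, dotProduct] using this

lemma aux_eigen (heig : ∀ i, Δ.mulVec (x i) = lam i • x i)
    (hT : IsGRSO (inducedGraphon ((n : ℝ) • Δ)) T) (i : Fin n) :
    T (phi n x i) = (lam i : ℂ) • phi n x i := by
  have hn : (n : ℂ) ≠ 0 := Nat.cast_ne_zero.mpr i.pos.ne'
  rw [grso_apply Δ T hT (phi n x i)]
  have hrhs : (lam i : ℂ) • phi n x i
      = inducedSignal (fun j => ((lam i:ℂ) * (Real.sqrt n:ℂ)) * (x i j:ℂ)) := by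
    rw [phi, smul_smul, sig_smul]
  rw [hrhs]
  congr 1
  funext p
  simp only [setIntegral_phi]
  rw [Finset.mul_sum]
  have h1 : ∀ k ∈ Finset.univ, (n:ℂ) * ((Δ p k:ℂ) * ((Real.sqrt n:ℂ) * ((x i k:ℂ) / n)))
      = (Real.sqrt n:ℂ) * ((Δ p k : ℂ) * (x i k : ℂ)) := fun k _ => by
    field_simp
  rw [Finset.sum_congr rfl h1, ← Finset.mul_sum]
  have h2 : ∑ k, (Δ p k:ℂ) * (x i k:ℂ) = ((lam i * x i p : ℝ) : ℂ) := by
    rw [← mulVec_entry heig i p]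
    push_cast
    rfl
  rw [h2]
  push_cast
  ring

lemma aux_orthonormal
    (horth : ∀ i i', ∑ j, x i j * x i' j = (if i = i' then (1 : ℝ) else 0)) :
    ∀ i i' : Fin n, (inner ℂ (phi n x i) (phi n x i') : ℂ) = if i = i' then 1 else 0 := by
  intro i i'
  have hn : (n : ℂ) ≠ 0 := Nat.cast_ne_zero.mpr i.pos.ne'
  rw [phi, phi, inner_smul_left, inner_smul_right, inner_sig, Complex.conj_ofReal]
  have h1 : ∀ j ∈ Finset.univ, (starRingEnd ℂ) ((x i j : ℂ))
      * ∫ v in part n j, (inducedSignal fun j => (x i' j : ℂ) : ℝ → ℂ) v ∂μ01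
      = (x i j : ℂ) * ((x i' j : ℂ) / n) := fun j _ => by
    rw [Complex.conj_ofReal, setIntegral_sig]
  rw [Finset.sum_congr rfl h1]
  have h2 : ∑ j, (x i j:ℂ) * ((x i' j:ℂ)/n)
      = ((if i = i' then (1:ℝ) else 0 : ℝ) : ℂ) / n := by
    rw [← horth i i']
    push_cast [Finset.sum_div]
    exact Finset.sum_congr rfl fun j _ => by ring
  rw [h2, ← mul_assoc, sqrt_mul_self_complex]
  rw [mul_div_cancel₀ _ hn]
  split_ifs <;> simp

lemma transpose_orthonormal
    (horth : ∀ i i', ∑ j, x i j * x i' j = (if i = i' then (1 : ℝ) else 0)) :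
    ∀ p k : Fin n, ∑ i, x i p * x i k = if p = k then (1:ℝ) else 0 := by
  intro p k
  have hXXt : (Matrix.of x) * (Matrix.of x).transpose = 1 := by
    ext i i'
    simpa [Matrix.mul_apply, Matrix.one_apply] using horth i i'
  have h2 := mul_eq_one_comm.mp hXXt
  have h3 := Matrix.ext_iff.mpr h2 p k
  simpa [Matrix.mul_apply, Matrix.one_apply] using h3

lemma spectral_decomp (heig : ∀ i, Δ.mulVec (x i) = lam i • x i)
    (horth : ∀ i i', ∑ j, x i j * x i' j = (if i = i' then (1 : ℝ) else 0))
    (p k : Fin n) : ∑ i, lam i * x i p * x i k = Δ p k := by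
  calc ∑ i, lam i * x i p * x i k = ∑ i, (∑ m, Δ p m * x i m) * x i k := by
        refine Finset.sum_congr rfl fun i _ => by rw [mulVec_entry heig i p]
    _ = ∑ m, Δ p m * ∑ i, x i m * x i k := by
        simp_rw [Finset.sum_mul, mul_assoc]
        rw [Finset.sum_comm]
        simp_rw [← Finset.mul_sum]
    _ = Δ p k := by
        simp [transpose_orthonormal horth, mul_ite]

lemma inner_phi (i : Fin n) (f : L2) :
    (inner ℂ (phi n x i) f : ℂ)
      = (Real.sqrt n : ℂ) * ∑ j, (x i j : ℂ) * ∫ u in part n j, f u ∂μ01 := by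
  rw [phi, inner_smul_left, inner_sig, Complex.conj_ofReal]
  congr 1
  exact Finset.sum_congr rfl fun j _ => by rw [Complex.conj_ofReal]

lemma aux_zero
    (horth : ∀ i i', ∑ j, x i j * x i' j = (if i = i' then (1 : ℝ) else 0))
    (hT : IsGRSO (inducedGraphon ((n : ℝ) • Δ)) T) (f : L2)
    (hf : ∀ i : Fin n, (inner ℂ (phi n x i) f : ℂ) = 0) : T f = 0 := by
  have hS : ∀ i, ∑ j, (x i j : ℂ) * ∫ u in part n j, f u ∂μ01 = 0 := by
    intro i
    have h0 := hf i
    rw [inner_phi] at h0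
    have hsq : (Real.sqrt n : ℂ) ≠ 0 := by
      have : (0:ℝ) < Real.sqrt n := Real.sqrt_pos.mpr (by exact_mod_cast i.pos)
      exact_mod_cast this.ne'
    rcases mul_eq_zero.mp h0 with h | h
    · exact absurd h hsq
    · exact h
  have hb0 : ∀ p : Fin n, ∫ u in part n p, f u ∂μ01 = 0 := by
    intro p
    calc ∫ u in part n p, f u ∂μ01
        = ∑ k, (if p = k then (1:ℂ) else 0) * ∫ u in part n k, f u ∂μ01 := by
          simp
      _ = ∑ k, ((∑ i, x i p * x i k : ℝ) : ℂ) * ∫ u in part n k, f u ∂μ01 := by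
          refine Finset.sum_congr rfl fun k _ => ?_
          congr 1
          rw [transpose_orthonormal horth p k]
          split_ifs <;> simp
      _ = ∑ i, (x i p : ℂ) * ∑ k, (x i k : ℂ) * ∫ u in part n k, f u ∂μ01 := by
          push_cast
          simp_rw [Finset.sum_mul, mul_assoc]
          rw [Finset.sum_comm]
          simp_rw [← Finset.mul_sum]
      _ = 0 := by
          simp_rw [hS]
          simp
  rw [grso_apply Δ T hT f]
  have : (fun i : Fin n => (n : ℂ) * ∑ k, (Δ i k : ℂ) * ∫ u in part n k, f u ∂μ01)
      = fun _ : Fin n => (0:ℂ) := funext fun i => by simp [hb0]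
  rw [this, sig_zero]

lemma key2 (heig : ∀ i, Δ.mulVec (x i) = lam i • x i)
    (horth : ∀ i i', ∑ j, x i j * x i' j = (if i = i' then (1 : ℝ) else 0))
    (hT : IsGRSO (inducedGraphon ((n : ℝ) • Δ)) T) (f : L2) :
    T f = ∑ i, ((lam i : ℂ) * (inner ℂ (phi n x i) f : ℂ)) • phi n x i := by
  rw [grso_apply Δ T hT f]
  have hterm : ∀ i : Fin n, ((lam i:ℂ) * (inner ℂ (phi n x i) f : ℂ)) • phi n x i
      = inducedSignal (fun p => (((lam i:ℂ) * ((Real.sqrt n:ℂ)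
          * ∑ j, (x i j:ℂ) * ∫ u in part n j, f u ∂μ01)) * (Real.sqrt n:ℂ)) * (x i p:ℂ)) := by
    intro i
    rw [inner_phi, phi, smul_smul, sig_smul]
  rw [Finset.sum_congr rfl (fun i _ => hterm i), sig_sum]
  congr 1
  funext p
  have hrw : ∀ i ∈ Finset.univ, (((lam i:ℂ) * ((Real.sqrt n:ℂ)
        * ∑ j, (x i j:ℂ) * ∫ u in part n j, f u ∂μ01)) * (Real.sqrt n:ℂ)) * (x i p:ℂ)
      = ∑ k, ((n:ℂ) * ((lam i * x i p * x i k : ℝ):ℂ)) * ∫ u in part n k, f u ∂μ01 := by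
    intro i _
    rw [show (((lam i:ℂ) * ((Real.sqrt n:ℂ)
          * ∑ j, (x i j:ℂ) * ∫ u in part n j, f u ∂μ01)) * (Real.sqrt n:ℂ)) * (x i p:ℂ)
        = ((Real.sqrt n:ℂ) * (Real.sqrt n:ℂ)) * (((lam i:ℂ) * (x i p:ℂ))
          * ∑ j, (x i j:ℂ) * ∫ u in part n j, f u ∂μ01) from by ring,
      sqrt_mul_self_complex, Finset.mul_sum, Finset.mul_sum]
    refine Finset.sum_congr rfl fun k _ => ?_
    push_cast
    ring
  rw [Finset.sum_congr rfl hrw, Finset.sum_comm, Finset.mul_sum]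
  refine Finset.sum_congr rfl fun k _ => ?_
  rw [← Finset.sum_mul, ← Finset.mul_sum, ← Complex.ofReal_sum,
    spectral_decomp heig horth p k]
  ring

set_option maxHeartbeats 1000000 in
lemma aux_spectrum (heig : ∀ i, Δ.mulVec (x i) = lam i • x i)
    (horth : ∀ i i', ∑ j, x i j * x i' j = (if i = i' then (1 : ℝ) else 0))
    (hT : IsGRSO (inducedGraphon ((n : ℝ) • Δ)) T) :
    ∀ z : ℂ, z ≠ 0 → (z ∈ spectrum ℂ T ↔ ∃ i, (lam i : ℂ) = z) := by
  intro z hz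
  have hbT : ∀ (g : L2) (i : Fin n),
      (inner ℂ (phi n x i) (T g) : ℂ) = (lam i:ℂ) * (inner ℂ (phi n x i) g : ℂ) := by
    intro g i
    rw [key2 heig horth hT g, inner_sum]
    simp_rw [inner_smul_right, aux_orthonormal horth, mul_ite, mul_one, mul_zero]
    rw [Finset.sum_ite_eq]
    simp
  constructor
  · intro hzs
    by_contra hno
    push_neg at hno
    apply spectrum.mem_iff.mp hzs
    have hzsub : ∀ i : Fin n, z - (lam i : ℂ) ≠ 0 := fun i => sub_ne_zero.mpr (Ne.symm (hno i))
    set d : Fin n → ℂ := fun i => (lam i : ℂ) * (z * (z - lam i))⁻¹ with hd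
    set S : L2 →L[ℂ] L2 := z⁻¹ • (1 : L2 →L[ℂ] L2)
      + ∑ i, d i • ((innerSL ℂ (phi n x i)).smulRight (phi n x i)) with hSdef
    have Sapp : ∀ g : L2,
        S g = z⁻¹ • g + ∑ i, (d i * (inner ℂ (phi n x i) g : ℂ)) • phi n x i := by
      intro g
      rw [hSdef]
      simp [ContinuousLinearMap.sum_apply, smul_smul]
    have hcS : ∀ (g : L2) (i : Fin n), (inner ℂ (phi n x i) (S g) : ℂ)
        = (z⁻¹ + d i) * (inner ℂ (phi n x i) g : ℂ) := by
      intro g i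
      rw [Sapp g, inner_add_right, inner_smul_right, inner_sum]
      simp_rw [inner_smul_right, aux_orthonormal horth, mul_ite, mul_one, mul_zero]
      rw [Finset.sum_ite_eq]
      simp
      ring
    have h1 : (algebraMap ℂ (L2 →L[ℂ] L2) z - T) * S = 1 := by
      ext g
      rw [ContinuousLinearMap.mul_apply, ContinuousLinearMap.one_apply,
        Algebra.algebraMap_eq_smul_one, ContinuousLinearMap.sub_apply,
        ContinuousLinearMap.smul_apply, ContinuousLinearMap.one_apply]
      rw [key2 heig horth hT (S g)]
      simp_rw [hcS g]
      rw [Sapp g, smul_add, smul_smul, mul_inv_cancel₀ hz, one_smul, Finset.smul_sum]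
      simp_rw [smul_smul]
      rw [add_sub_assoc, ← Finset.sum_sub_distrib]
      simp_rw [← sub_smul]
      have hco : ∀ i ∈ Finset.univ,
          (z * (d i * (inner ℂ (phi n x i) g : ℂ))
            - (lam i:ℂ) * ((z⁻¹ + d i) * (inner ℂ (phi n x i) g : ℂ))) • phi n x i
          = (0:ℂ) • phi n x i := by
        intro i _
        congr 1
        rw [hd]
        have h5 : z * (z - (lam i : ℂ)) ≠ 0 := mul_ne_zero hz (hzsub i)
        field_simp [h5, hzsub i]
        ring
      rw [Finset.sum_congr rfl hco]
      simp
    have h2 : S * (algebraMap ℂ (L2 →L[ℂ] L2) z - T) = 1 := by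
      ext g
      rw [ContinuousLinearMap.mul_apply, ContinuousLinearMap.one_apply,
        Algebra.algebraMap_eq_smul_one, ContinuousLinearMap.sub_apply,
        ContinuousLinearMap.smul_apply, ContinuousLinearMap.one_apply]
      rw [Sapp (z • g - T g)]
      have hco : ∀ i ∈ Finset.univ,
          (d i * (inner ℂ (phi n x i) (z • g - T g) : ℂ)) • phi n x i
          = ((d i * (z - (lam i:ℂ))) * (inner ℂ (phi n x i) g : ℂ)) • phi n x i := by
        intro i _
        rw [inner_sub_right, inner_smul_right, hbT g i]
        congr 1
        ring
      rw [Finset.sum_congr rfl hco]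
      rw [smul_sub, smul_smul, inv_mul_cancel₀ hz, one_smul, key2 heig horth hT g,
        Finset.smul_sum]
      simp_rw [smul_smul]
      rw [sub_add_eq_add_sub, add_sub_assoc, ← Finset.sum_sub_distrib]
      simp_rw [← sub_smul]
      have hco2 : ∀ i ∈ Finset.univ,
          ((d i * (z - (lam i:ℂ))) * (inner ℂ (phi n x i) g : ℂ)
            - z⁻¹ * ((lam i:ℂ) * (inner ℂ (phi n x i) g : ℂ))) • phi n x i
          = (0:ℂ) • phi n x i := by
        intro i _
        congr 1
        rw [hd]
        have h5 : z * (z - (lam i : ℂ)) ≠ 0 := mul_ne_zero hz (hzsub i)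
        field_simp [h5, hzsub i]
        ring
      rw [Finset.sum_congr rfl hco2]
      simp
    exact ⟨⟨algebraMap ℂ (L2 →L[ℂ] L2) z - T, S, h1, h2⟩, rfl⟩
  · rintro ⟨i, hi⟩
    rw [spectrum.mem_iff]
    intro hU
    have hφne : phi n x i ≠ 0 := by
      intro h0
      have h := aux_orthonormal horth i i
      rw [h0] at h
      simp at h
    obtain ⟨u, hu⟩ := hU
    have happ : (algebraMap ℂ (L2 →L[ℂ] L2) z - T) (phi n x i) = 0 := by
      rw [Algebra.algebraMap_eq_smul_one, ContinuousLinearMap.sub_apply,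
        ContinuousLinearMap.smul_apply, ContinuousLinearMap.one_apply,
        aux_eigen heig hT i, ← hi]
      simp
    have hzero : phi n x i = 0 := by
      have h4 : ((↑u⁻¹ : L2 →L[ℂ] L2) * (algebraMap ℂ (L2 →L[ℂ] L2) z - T)) (phi n x i)
          = phi n x i := by
        rw [← hu, Units.inv_mul, ContinuousLinearMap.one_apply]
      rw [ContinuousLinearMap.mul_apply, happ, map_zero] at h4
      exact h4.symm
    exact hφne hzero

end Main

/-- If `Δ` is symmetric with orthonormal eigenbasis `x¹,…,xⁿ` and eigenvalues
`λ¹,…,λⁿ`, and `A = nΔ`, then the `√n·ψ_{xⁱ}` are eigenvectors of `T_{W_A}` with eigenvalues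
`λⁱ`, they are orthonormal in `L²[0,1]`, every `f` orthogonal to all of them satisfies
`T_{W_A} f = 0`, and the nonzero spectrum of `T_{W_A}` consists exactly of the nonzero
eigenvalues of `Δ`. -/
theorem statement1 (n : ℕ) (Δ : Matrix (Fin n) (Fin n) ℝ) (hΔ : Δ.IsSymm)
    (x : Fin n → Fin n → ℝ) (lam : Fin n → ℝ)
    (heig : ∀ i, Δ.mulVec (x i) = lam i • x i)
    (horth : ∀ i i', ∑ j, x i j * x i' j = (if i = i' then (1 : ℝ) else 0))
    (T : L2 →L[ℂ] L2) (hT : IsGRSO (inducedGraphon ((n : ℝ) • Δ)) T) :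
    (∀ i, T ((Real.sqrt n : ℂ) • inducedSignal (fun j => (x i j : ℂ))) =
        (lam i : ℂ) • ((Real.sqrt n : ℂ) • inducedSignal (fun j => (x i j : ℂ)))) ∧
    Orthonormal ℂ (fun i : Fin n =>
      (Real.sqrt n : ℂ) • inducedSignal (fun j => (x i j : ℂ))) ∧
    (∀ f : L2,
      (∀ i : Fin n,
        (inner ℂ ((Real.sqrt n : ℂ) • inducedSignal (fun j => (x i j : ℂ))) f : ℂ) = 0) →
      T f = 0) ∧
    (∀ z : ℂ, z ≠ 0 → (z ∈ spectrum ℂ T ↔ ∃ i, (lam i : ℂ) = z)) := by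
  classical
  exact ⟨fun i => aux_eigen heig hT i,
    orthonormal_iff_ite.mpr (aux_orthonormal horth),
    fun f hf => aux_zero horth hT f hf,
    aux_spectrum heig horth hT⟩
end
end

section
/- Let γ > 0 and let h : ℝ → ℂ be a continuous γ-periodic function whose Fourier coefficients ĥ(n) = (1/γ)∫_{−γ/2}^{γ/2} h(t)·e^{−2πint/γ} dt satisfy K := Σ_{n∈ℤ} |n|·|ĥ(n)| < ∞. Let A and B be bounded self-adjoint operators on a complex Hilbert space H with ‖A − B‖_{H→H} ≤ ε for some ε > 0. Then ‖h(A) − h(B)‖_{H→H} ≤ (2 + (2π/γ)·K)·ε. -/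
set_option maxHeartbeats 1000000

noncomputable section

open NormedSpace Complex Set

section Aux

variable {H : Type*} [NormedAddCommGroup H] [InnerProductSpace ℂ H] [CompleteSpace H]

private lemma aux_norm_expI_le_one (S : H →L[ℂ] H) (hS : IsSelfAdjoint S) :
    ‖NormedSpace.exp (Complex.I • S)‖ ≤ 1 := by
  have hu := (selfAdjoint.expUnitary (⟨S, hS⟩ : selfAdjoint (H →L[ℂ] H))).2
  have h1 : star (NormedSpace.exp (Complex.I • S)) * NormedSpace.exp (Complex.I • S) = 1 :=
    (Unitary.mem_iff.mp hu).1
  have h2 : ‖star (NormedSpace.exp (Complex.I • S)) * NormedSpace.exp (Complex.I • S)‖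
      = ‖NormedSpace.exp (Complex.I • S)‖ * ‖NormedSpace.exp (Complex.I • S)‖ := CStarRing.norm_star_mul_self
  have h3 : ‖(1 : H →L[ℂ] H)‖ ≤ 1 := by
    rw [ContinuousLinearMap.one_def]; exact ContinuousLinearMap.norm_id_le
  rw [h1] at h2
  nlinarith [norm_nonneg (NormedSpace.exp (Complex.I • S))]

private lemma aux_exp_lipschitz (S T : H →L[ℂ] H) (hS : IsSelfAdjoint S) (hT : IsSelfAdjoint T) :
    ‖NormedSpace.exp (Complex.I • S) - NormedSpace.exp (Complex.I • T)‖ ≤ ‖S - T‖ := by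
  set x := Complex.I • S with hx
  set y := Complex.I • T with hy
  have hnorm : ∀ (t : ℝ) (U : H →L[ℂ] H), IsSelfAdjoint U →
      ‖NormedSpace.exp ((t : ℂ) • (Complex.I • U))‖ ≤ 1 := by
    intro t U hU
    rw [smul_comm (t : ℂ) Complex.I U]
    refine aux_norm_expI_le_one _ ?_
    rw [IsSelfAdjoint, star_smul, hU.star_eq]
    simp [Complex.star_def, Complex.conj_ofReal]
  set f : ℝ → (H →L[ℂ] H) := fun t => NormedSpace.exp ((t : ℂ) • x) * NormedSpace.exp ((1 - (t : ℂ)) • y) with hf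
  set f' : ℝ → (H →L[ℂ] H) :=
    fun t => NormedSpace.exp ((t : ℂ) • x) * (x - y) * NormedSpace.exp ((1 - (t : ℂ)) • y) with hf'
  have hderiv : ∀ t : ℝ, HasDerivAt f (f' t) t := by
    intro t
    have h1 : HasDerivAt (fun t : ℝ => NormedSpace.exp ((t : ℂ) • x)) (NormedSpace.exp ((t : ℂ) • x) * x) t := by
      have := HasDerivAt.scomp (g₁ := fun z : ℂ => NormedSpace.exp (z • x)) t
        (hasDerivAt_exp_smul_const (𝕂 := ℂ) x ((t : ℝ) : ℂ)) (Complex.ofRealCLM.hasDerivAt)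
      rw [Complex.ofRealCLM_apply, Complex.ofReal_one, one_smul] at this
      exact this
    have h2 : HasDerivAt (fun t : ℝ => NormedSpace.exp ((1 - (t : ℂ)) • y))
        ((-1 : ℂ) • (y * NormedSpace.exp ((1 - (t : ℂ)) • y))) t := by
      have hs : HasDerivAt (fun t : ℝ => 1 - (t : ℂ)) (-1 : ℂ) t := by
        simpa using (Complex.ofRealCLM.hasDerivAt (x := t)).const_sub 1
      exact HasDerivAt.scomp (g₁ := fun z : ℂ => NormedSpace.exp (z • y)) t
        (hasDerivAt_exp_smul_const' (𝕂 := ℂ) y (1 - (t : ℂ))) hs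
    have heq : NormedSpace.exp ((t:ℂ) • x) * x * NormedSpace.exp ((1 - (t:ℂ)) • y)
        + NormedSpace.exp ((t:ℂ) • x) * ((-1 : ℂ) • (y * NormedSpace.exp ((1 - (t:ℂ)) • y)))
        = f' t := by
      rw [hf']
      simp only [neg_smul, one_smul, mul_neg]
      noncomm_ring
    exact heq ▸ h1.mul h2
  have hbound : ∀ t ∈ Icc (0 : ℝ) 1, ‖f' t‖ ≤ ‖S - T‖ := by
    intro t ht
    have e1 : ‖NormedSpace.exp ((t : ℂ) • x)‖ ≤ 1 := hnorm t S hS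
    have e2 : ‖NormedSpace.exp ((1 - (t : ℂ)) • y)‖ ≤ 1 := by
      have : (1 - (t : ℂ)) = ((1 - t : ℝ) : ℂ) := by push_cast; ring
      rw [this]; exact hnorm (1 - t) T hT
    have e3 : ‖x - y‖ = ‖S - T‖ := by
      rw [hx, hy, ← smul_sub, norm_smul, Complex.norm_I, one_mul]
    calc ‖f' t‖ ≤ ‖NormedSpace.exp ((t : ℂ) • x) * (x - y)‖ * ‖NormedSpace.exp ((1 - (t : ℂ)) • y)‖ := norm_mul_le _ _
      _ ≤ ‖NormedSpace.exp ((t : ℂ) • x)‖ * ‖x - y‖ * ‖NormedSpace.exp ((1 - (t : ℂ)) • y)‖ := by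
          gcongr; exact norm_mul_le _ _
      _ = ‖NormedSpace.exp ((t : ℂ) • x)‖ * ‖S - T‖ * ‖NormedSpace.exp ((1 - (t : ℂ)) • y)‖ := by rw [e3]
      _ ≤ 1 * ‖S - T‖ * 1 := by gcongr
      _ = ‖S - T‖ := by ring
  have key := norm_image_sub_le_of_norm_deriv_le_segment_01'
    (f' := f') (fun t _ => (hderiv t).hasDerivWithinAt)
    (fun t ht => hbound t (Set.Ico_subset_Icc_self ht))
  have hf1 : f 1 = NormedSpace.exp x := by simp [hf]
  have hf0 : f 0 = NormedSpace.exp y := by simp [hf]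
  rwa [hf1, hf0] at key

private lemma aux_isStarNormal_smul (c : ℂ) (T : H →L[ℂ] H) (hT : IsSelfAdjoint T) :
    IsStarNormal (c • T) := by
  constructor
  rw [star_smul, hT.star_eq]
  exact ((Commute.refl T).smul_left _).smul_right _

private lemma aux_cfc_exp (c : ℂ) (T : H →L[ℂ] H) (hT : IsSelfAdjoint T) :
    cfc (fun z : ℂ => Complex.exp (c * z)) T = NormedSpace.exp (c • T) := by
  have hn : IsStarNormal T := hT.isStarNormal
  have h2 := cfc_comp' Complex.exp (fun z : ℂ => c * z) T
    (Complex.continuous_exp.continuousOn) ((continuous_const.mul continuous_id).continuousOn) hn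
  have h3 : cfc (fun z : ℂ => c * z) T = c • T := cfc_const_mul_id c T hn
  rw [h3, CFC.complex_exp_eq_normedSpace_exp (aux_isStarNormal_smul c T hT)] at h2
  exact h2

open Real in
private lemma aux_cfc_fourier (γ : ℝ) (n : ℤ) (T : H →L[ℂ] H) (hT : IsSelfAdjoint T) :
    cfc (fun z : ℂ => (fourier n ((z.re : ℝ) : AddCircle γ) : ℂ)) T
      = NormedSpace.exp (((((2 * π * n / γ : ℝ)) : ℂ) * Complex.I) • T) := by
  have hn : IsStarNormal T := hT.isStarNormal
  have hcongr : (spectrum ℂ T).EqOn (fun z : ℂ => (fourier n ((z.re : ℝ) : AddCircle γ) : ℂ))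
      (fun z : ℂ => Complex.exp ((((2 * π * n / γ : ℝ)) : ℂ) * Complex.I * z)) := by
    intro z hz
    have hz' : z = (z.re : ℂ) := hT.mem_spectrum_eq_re hz
    simp only
    rw [fourier_coe_apply]
    congr 1
    rw [hz']
    simp only [Complex.ofReal_re]
    push_cast
    ring
  rw [cfc_congr hcongr]
  exact aux_cfc_exp _ T hT

end Aux

/-- Let `γ > 0` and `h : ℝ → ℂ` be continuous and `γ`-periodic with Fourier
coefficients `c n = (1/γ)∫_{−γ/2}^{γ/2} h(t)·e^{−2πint/γ} dt` satisfying
`K = Σ_{n∈ℤ} |n|·|c n| < ∞`.  If `A, B` are bounded self-adjoint operators on a complex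
Hilbert space with `‖A − B‖ ≤ ε`, then `‖h(A) − h(B)‖ ≤ (2 + (2π/γ)·K)·ε`.
Since the spectrum of a self-adjoint operator is real, `h(T)` is realized as the continuous
functional calculus of `z ↦ h(Re z)` applied to `T`. -/
theorem statement6 (γ : ℝ) (hγ : 0 < γ) (h : ℝ → ℂ) (hh : Continuous h)
    (hper : Function.Periodic h γ)
    (c : ℤ → ℂ)
    (hc : ∀ n : ℤ, c n = (1 / (γ : ℂ)) *
      ∫ t in (-γ/2)..(γ/2), h t * Complex.exp (-(2 * Real.pi * Complex.I * n * t / γ)))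
    (K : ℝ) (hK : HasSum (fun n : ℤ => (|n| : ℝ) * ‖c n‖) K)
    (H : Type*) [NormedAddCommGroup H] [InnerProductSpace ℂ H] [CompleteSpace H]
    (A B : H →L[ℂ] H) (hA : IsSelfAdjoint A) (hB : IsSelfAdjoint B)
    (ε : ℝ) (hε : 0 < ε) (hAB : ‖A - B‖ ≤ ε) :
    ‖cfc (fun z : ℂ => h z.re) A - cfc (fun z : ℂ => h z.re) B‖ ≤
      (2 + (2 * Real.pi / γ) * K) * ε := by
  haveI : Fact (0 < γ) := ⟨hγ⟩
  have hKnn : 0 ≤ K := hK.nonneg fun n => mul_nonneg (by positivity) (norm_nonneg _)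
  have hπ : 0 < Real.pi := Real.pi_pos
  set F : C(AddCircle γ, ℂ) := ⟨hper.lift, continuous_coinduced_dom.mpr hh⟩ with hFdef
  -- Fourier coefficients of F are the c n
  have hcoeff : ∀ n : ℤ, fourierCoeff (F : AddCircle γ → ℂ) n = c n := by
    intro n
    rw [fourierCoeff_eq_intervalIntegral (F : AddCircle γ → ℂ) n (-γ/2), hc n]
    rw [show -γ/2 + γ = γ/2 by ring]
    rw [intervalIntegral.integral_congr
      (g := fun t : ℝ => h t * Complex.exp (-(2 * Real.pi * Complex.I * n * t / γ)))]
    · rw [Complex.real_smul]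
      push_cast
      ring
    · intro t _
      simp only
      have hFt : (F : AddCircle γ → ℂ) (t : AddCircle γ) = h t := hper.lift_coe t
      rw [hFt, smul_eq_mul, fourier_coe_apply, mul_comm]
      congr 1
      push_cast
      ring
  -- summability
  have hsc : Summable c := by
    refine Summable.of_norm_bounded_eventually hK.summable ?_
    apply Filter.eventually_cofinite.mpr
    apply Set.Finite.subset (Set.finite_singleton (0 : ℤ))
    intro n hn
    simp only [Set.mem_setOf_eq, not_le] at hn
    simp only [Set.mem_singleton_iff]
    by_contra h0
    have h1 : (1 : ℝ) ≤ |(n : ℝ)| := by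
      rw [← Int.cast_abs]
      exact_mod_cast Int.one_le_abs h0
    nlinarith [norm_nonneg (c n)]
  have hFcsum : Summable (fourierCoeff (F : AddCircle γ → ℂ)) := by
    rw [funext hcoeff]; exact hsc
  have hFS : HasSum (fun n : ℤ => fourierCoeff (F : AddCircle γ → ℂ) n • fourier n) F :=
    hasSum_fourier_series_of_summable hFcsum
  -- transfer to operators
  have transfer : ∀ (T : H →L[ℂ] H), IsSelfAdjoint T →
      HasSum (fun n : ℤ => c n • NormedSpace.exp (((((2 * Real.pi * n / γ : ℝ)) : ℂ) * Complex.I) • T))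
        (cfc (fun z : ℂ => h z.re) T) := by
    intro T hT
    have hnT : IsStarNormal T := hT.isStarNormal
    let q : C(spectrum ℂ T, AddCircle γ) :=
      ⟨fun z => (((z : ℂ).re : ℝ) : AddCircle γ),
        continuous_quotient_mk'.comp (Complex.continuous_re.comp continuous_subtype_val)⟩
    have h1 := hFS.map (ContinuousMap.compStarAlgHom' ℂ ℂ q)
      (ContinuousMap.continuous_precomp q)
    have h2 := h1.map (cfcHom hnT (R := ℂ)) (cfcHom_isClosedEmbedding hnT).continuous
    have key1 : ∀ n : ℤ, cfcHom hnT
          ((ContinuousMap.compStarAlgHom' ℂ ℂ q) (fourierCoeff (F : AddCircle γ → ℂ) n • fourier n))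
        = c n • NormedSpace.exp (((((2 * Real.pi * n / γ : ℝ)) : ℂ) * Complex.I) • T) := by
      intro n
      rw [map_smul, map_smul, hcoeff]
      congr 1
      have hcont : ContinuousOn (fun z : ℂ => (fourier n ((z.re : ℝ) : AddCircle γ) : ℂ))
          (spectrum ℂ T) :=
        ((map_continuous (fourier n)).comp
          (continuous_quotient_mk'.comp Complex.continuous_re)).continuousOn
      have e1 : (ContinuousMap.compStarAlgHom' ℂ ℂ q) (fourier n)
          = ⟨(spectrum ℂ T).domRestrict (fun z : ℂ => (fourier n ((z.re : ℝ) : AddCircle γ) : ℂ)),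
              hcont.restrict⟩ := rfl
      rw [e1, ← cfc_apply (fun z : ℂ => (fourier n ((z.re : ℝ) : AddCircle γ) : ℂ)) T hnT hcont]
      exact aux_cfc_fourier γ n T hT
    have keyF : cfcHom hnT ((ContinuousMap.compStarAlgHom' ℂ ℂ q) F)
        = cfc (fun z : ℂ => h z.re) T := by
      have hcont : ContinuousOn (fun z : ℂ => h z.re) (spectrum ℂ T) :=
        (hh.comp Complex.continuous_re).continuousOn
      rw [cfc_apply (fun z : ℂ => h z.re) T hnT hcont]
      exact (congrArg _ (ContinuousMap.ext fun z => hper.lift_coe _)).symm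
    simp only [Function.comp_def] at h2
    simp only [key1] at h2
    rwa [keyF] at h2
  have hSA := transfer A hA
  have hSB := transfer B hB
  have hdiff : HasSum (fun n : ℤ =>
      c n • (NormedSpace.exp (((((2 * Real.pi * n / γ : ℝ)) : ℂ) * Complex.I) • A)
           - NormedSpace.exp (((((2 * Real.pi * n / γ : ℝ)) : ℂ) * Complex.I) • B)))
      (cfc (fun z : ℂ => h z.re) A - cfc (fun z : ℂ => h z.re) B) := by
    simpa only [smul_sub] using hSA.sub hSB
  -- termwise bound
  have hbound : ∀ n : ℤ,
      ‖c n • (NormedSpace.exp (((((2 * Real.pi * n / γ : ℝ)) : ℂ) * Complex.I) • A)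
            - NormedSpace.exp (((((2 * Real.pi * n / γ : ℝ)) : ℂ) * Complex.I) • B))‖
      ≤ (2 * Real.pi / γ * ε) * ((|n| : ℝ) * ‖c n‖) := by
    intro n
    set s : ℝ := 2 * Real.pi * n / γ with hs
    have hsaA : IsSelfAdjoint ((s : ℂ) • A) := by
      rw [IsSelfAdjoint, star_smul, hA.star_eq]
      simp [Complex.star_def, Complex.conj_ofReal]
    have hsaB : IsSelfAdjoint ((s : ℂ) • B) := by
      rw [IsSelfAdjoint, star_smul, hB.star_eq]
      simp [Complex.star_def, Complex.conj_ofReal]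
    have erw : ∀ T : H →L[ℂ] H, (((s : ℝ) : ℂ) * Complex.I) • T = Complex.I • ((s : ℂ) • T) := by
      intro T; rw [mul_comm, mul_smul]
    have hlip := aux_exp_lipschitz ((s : ℂ) • A) ((s : ℂ) • B) hsaA hsaB
    have hr : ‖(s : ℂ) • A - (s : ℂ) • B‖ ≤ |s| * ε := by
      rw [← smul_sub, norm_smul, Complex.norm_real, Real.norm_eq_abs]
      exact mul_le_mul_of_nonneg_left hAB (abs_nonneg s)
    have habs : |s| = 2 * Real.pi / γ * |(n : ℝ)| := by
      rw [hs, abs_div, abs_of_pos hγ, abs_mul, abs_of_pos (by positivity : (0:ℝ) < 2 * Real.pi)]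
      ring
    rw [norm_smul, erw A, erw B]
    calc ‖c n‖ * ‖NormedSpace.exp (Complex.I • ((s:ℂ) • A)) - NormedSpace.exp (Complex.I • ((s:ℂ) • B))‖
        ≤ ‖c n‖ * (|s| * ε) := by
          exact mul_le_mul_of_nonneg_left (hlip.trans hr) (norm_nonneg _)
      _ = (2 * Real.pi / γ * ε) * ((|n| : ℝ) * ‖c n‖) := by
          rw [habs]
          ring
  have hsummands : Summable (fun n : ℤ =>
      ‖c n • (NormedSpace.exp (((((2 * Real.pi * n / γ : ℝ)) : ℂ) * Complex.I) • A)
            - NormedSpace.exp (((((2 * Real.pi * n / γ : ℝ)) : ℂ) * Complex.I) • B))‖) :=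
    Summable.of_nonneg_of_le (fun _ => norm_nonneg _) hbound (hK.summable.mul_left _)
  calc ‖cfc (fun z : ℂ => h z.re) A - cfc (fun z : ℂ => h z.re) B‖
      = ‖∑' n : ℤ, c n • (NormedSpace.exp (((((2 * Real.pi * n / γ : ℝ)) : ℂ) * Complex.I) • A)
            - NormedSpace.exp (((((2 * Real.pi * n / γ : ℝ)) : ℂ) * Complex.I) • B))‖ := by
        rw [hdiff.tsum_eq]
    _ ≤ ∑' n : ℤ, ‖c n • (NormedSpace.exp (((((2 * Real.pi * n / γ : ℝ)) : ℂ) * Complex.I) • A)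
            - NormedSpace.exp (((((2 * Real.pi * n / γ : ℝ)) : ℂ) * Complex.I) • B))‖ :=
        norm_tsum_le_tsum_norm hsummands
    _ ≤ ∑' n : ℤ, (2 * Real.pi / γ * ε) * ((|n| : ℝ) * ‖c n‖) :=
        Summable.tsum_le_tsum hbound hsummands (hK.summable.mul_left _)
    _ = (2 * Real.pi / γ * ε) * K := by
        rw [tsum_mul_left, hK.tsum_eq]
    _ ≤ (2 + (2 * Real.pi / γ) * K) * ε := by
        have h1 : 0 < 2 * Real.pi / γ := by positivity
        nlinarith
end
end

section
/- Let (A_n)_{n∈ℕ} be a sequence of symmetric matrices A_n ∈ ℝ^{n×n} and let W be a graphon such that ‖T_{W_{A_n}} − T_W‖_{L²[0,1]→L²[0,1]} → 0 as n → ∞. Let h : ℝ → ℝ be continuous. Then: (1) ‖h(T_{W_{A_n}}) − h(T_W)‖_{L²[0,1]→L²[0,1]} → 0; and (2) if (x_n)_n is a sequence of signals x_n ∈ ℂⁿ and ψ ∈ L²[0,1] is such that ‖ψ_{x_n} − ψ‖_{L²[0,1]} → 0, then ‖h(T_{W_{A_n}})ψ_{x_n} − h(T_W)ψ‖_{L²[0,1]}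 → 0. -/
open MeasureTheory Filter

noncomputable section

-- self-adjointness
lemma isSelfAdjoint_of_isGRSO (W : ℝ → ℝ → ℝ) (hW : IsGraphon W)
    (T : L2 →L[ℂ] L2) (hT : IsGRSO W T) : IsSelfAdjoint T := by
  apply LinearMap.IsSymmetric.isSelfAdjoint
  intro f g
  simp only [ContinuousLinearMap.coe_coe]
  obtain ⟨C, hC⟩ := hW.bdd
  -- integrability of the kernel function
  have hfint : Integrable (fun u => (f : ℝ → ℂ) u) μ01 :=
    (Lp.memLp f).integrable (by norm_num)
  have hgint : Integrable (fun v => (g : ℝ → ℂ) v) μ01 :=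
    (Lp.memLp g).integrable (by norm_num)
  have hker : Integrable (fun z : ℝ × ℝ =>
      ((W z.1 z.2 : ℂ) * (starRingEnd ℂ) ((f : ℝ → ℂ) z.2)) * (g : ℝ → ℂ) z.1)
      (μ01.prod μ01) := by
    have hmeas : AEStronglyMeasurable (fun z : ℝ × ℝ =>
        ((W z.1 z.2 : ℂ) * (starRingEnd ℂ) ((f : ℝ → ℂ) z.2)) * (g : ℝ → ℂ) z.1)
        (μ01.prod μ01) := by
      refine AEStronglyMeasurable.mul (AEStronglyMeasurable.mul ?_ ?_) ?_
      · exact (Complex.measurable_ofReal.comp hW.meas).aestronglyMeasurable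
      · exact continuous_star.comp_aestronglyMeasurable (Lp.aestronglyMeasurable f).comp_snd
      · exact (Lp.aestronglyMeasurable g).comp_fst
    have hbound : Integrable (fun z : ℝ × ℝ =>
        C * (‖(g : ℝ → ℂ) z.1‖ * ‖(f : ℝ → ℂ) z.2‖)) (μ01.prod μ01) :=
      (hgint.norm.mul_prod hfint.norm).const_mul C
    refine hbound.mono' hmeas (Filter.Eventually.of_forall fun z => ?_)
    have h1 : ‖((W z.1 z.2 : ℂ) * (starRingEnd ℂ) ((f : ℝ → ℂ) z.2)) * (g : ℝ → ℂ) z.1‖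
        = |W z.1 z.2| * ‖(f : ℝ → ℂ) z.2‖ * ‖(g : ℝ → ℂ) z.1‖ := by
      simp [norm_mul, Complex.norm_real]
    rw [h1]
    have h2 : |W z.1 z.2| ≤ C := hC _ _
    have h3 : (0:ℝ) ≤ ‖(f : ℝ → ℂ) z.2‖ * ‖(g : ℝ → ℂ) z.1‖ := by positivity
    calc |W z.1 z.2| * ‖(f : ℝ → ℂ) z.2‖ * ‖(g : ℝ → ℂ) z.1‖
        = |W z.1 z.2| * (‖(f : ℝ → ℂ) z.2‖ * ‖(g : ℝ → ℂ) z.1‖) := by ring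
      _ ≤ C * (‖(f : ℝ → ℂ) z.2‖ * ‖(g : ℝ → ℂ) z.1‖) := by
          exact mul_le_mul_of_nonneg_right h2 h3
      _ = C * (‖(g : ℝ → ℂ) z.1‖ * ‖(f : ℝ → ℂ) z.2‖) := by ring
  -- compute both inner products
  have hTf := hT f
  have hTg := hT g
  rw [MeasureTheory.L2.inner_def, MeasureTheory.L2.inner_def]
  simp only [RCLike.inner_apply']
  have e1 : ∫ v, (starRingEnd ℂ) ((T f : ℝ → ℂ) v) * (g : ℝ → ℂ) v ∂μ01
      = ∫ v, (∫ u, (W v u : ℂ) * (starRingEnd ℂ) ((f : ℝ → ℂ) u) ∂μ01) * (g : ℝ → ℂ) v ∂μ01 := by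
    refine integral_congr_ae ?_
    filter_upwards [hTf] with v hv
    rw [hv, ← integral_conj]
    congr 1
    refine integral_congr_ae (Filter.Eventually.of_forall fun u => ?_)
    simp [map_mul, Complex.conj_ofReal]
  have e2 : ∫ u, (starRingEnd ℂ) ((f : ℝ → ℂ) u) * (T g : ℝ → ℂ) u ∂μ01
      = ∫ u, (starRingEnd ℂ) ((f : ℝ → ℂ) u) * (∫ v, (W u v : ℂ) * (g : ℝ → ℂ) v ∂μ01) ∂μ01 := by
    refine integral_congr_ae ?_
    filter_upwards [hTg] with u hu
    rw [hu]
  rw [e1, e2]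
  -- rewrite as iterated integrals of the same kernel and swap
  have e3 : ∫ v, (∫ u, (W v u : ℂ) * (starRingEnd ℂ) ((f : ℝ → ℂ) u) ∂μ01) * (g : ℝ → ℂ) v ∂μ01
      = ∫ v, ∫ u, ((W v u : ℂ) * (starRingEnd ℂ) ((f : ℝ → ℂ) u)) * (g : ℝ → ℂ) v ∂μ01 ∂μ01 := by
    refine integral_congr_ae (Filter.Eventually.of_forall fun v => ?_)
    beta_reduce
    rw [← integral_mul_const]
  have e4 : ∫ u, (starRingEnd ℂ) ((f : ℝ → ℂ) u) * (∫ v, (W u v : ℂ) * (g : ℝ → ℂ) v ∂μ01) ∂μ01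
      = ∫ u, ∫ v, ((W v u : ℂ) * (starRingEnd ℂ) ((f : ℝ → ℂ) u)) * (g : ℝ → ℂ) v ∂μ01 ∂μ01 := by
    refine integral_congr_ae (Filter.Eventually.of_forall fun u => ?_)
    beta_reduce
    rw [← integral_const_mul]
    refine integral_congr_ae (Filter.Eventually.of_forall fun v => ?_)
    beta_reduce
    rw [hW.symm u v]
    ring
  rw [e3, e4]
  exact integral_integral_swap hker

lemma mu01_univ : μ01 Set.univ = 1 := by
  rw [Measure.restrict_apply_univ, Real.volume_Icc]; norm_num

instance : Nontrivial L2 := by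
  refine ⟨indicatorConstLp 2 MeasurableSet.univ (by rw [mu01_univ]; exact ENNReal.one_ne_top) (1:ℂ),
    0, fun hcontra => ?_⟩
  have hn := norm_indicatorConstLp (μ := μ01) (s := Set.univ) (c := (1:ℂ))
    (hs := MeasurableSet.univ) (hμs := by rw [mu01_univ]; exact ENNReal.one_ne_top)
    (hp_ne_zero := (by norm_num : (2:ENNReal) ≠ 0)) (hp_ne_top := (by norm_num : (2:ENNReal) ≠ ⊤))
  rw [hcontra] at hn
  simp [mu01_univ] at hn

open Polynomial in
lemma cfc_close_to_poly (h : ℝ → ℝ) (hh : Continuous h) (M ε : ℝ) (hε : 0 < ε)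
    (q : ℝ[X]) (hq : ∀ x ∈ Set.Icc (-M) M, |q.eval x - h x| < ε)
    (b : L2 →L[ℂ] L2) (hb : IsSelfAdjoint b) (hbM : ‖b‖ ≤ M) :
    ‖cfc h b - aeval b q‖ ≤ ε := by
  rw [← cfc_polynomial q b hb]
  rw [← cfc_sub h (fun x => q.eval x) b (hh.continuousOn) ((Polynomial.continuous q).continuousOn)]
  refine norm_cfc_le hε.le fun x hx => ?_
  have hxb : |x| ≤ ‖b‖ := Real.norm_eq_abs x ▸ spectrum.norm_le_norm_of_mem hx
  have hxI : x ∈ Set.Icc (-M) M := by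
    rw [Set.mem_Icc]
    constructor <;> [linarith [neg_abs_le x]; linarith [le_abs_self x]]
  have := hq x hxI
  rw [Real.norm_eq_abs, abs_sub_comm]
  linarith

open Polynomial in
lemma cfc_tendsto_of_tendsto (Tn : ℕ → L2 →L[ℂ] L2) (T : L2 →L[ℂ] L2)
    (hn : ∀ n, IsSelfAdjoint (Tn n)) (hT : IsSelfAdjoint T)
    (hconv : Tendsto (fun n => ‖Tn n - T‖) atTop (nhds 0))
    (h : ℝ → ℝ) (hh : Continuous h) :
    Tendsto (fun n => ‖cfc h (Tn n) - cfc h T‖) atTop (nhds 0) := by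
  have htends : Tendsto Tn atTop (nhds T) := by
    rw [tendsto_iff_norm_sub_tendsto_zero]; exact hconv
  rw [Metric.tendsto_atTop]
  intro ε hε
  set M : ℝ := ‖T‖ + 1 with hM
  obtain ⟨q, hq⟩ := exists_polynomial_near_of_continuousOn (-M) M h hh.continuousOn (ε / 4)
    (by linarith)
  -- eventually ‖Tn n‖ ≤ M
  have hev1 : ∀ᶠ n in atTop, ‖Tn n‖ ≤ M := by
    have := (Metric.tendsto_atTop.mp hconv) 1 one_pos
    obtain ⟨N, hN⟩ := this
    refine Filter.eventually_atTop.mpr ⟨N, fun n hn' => ?_⟩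
    have := hN n hn'
    rw [Real.dist_eq, sub_zero, abs_of_nonneg (norm_nonneg _)] at this
    calc ‖Tn n‖ = ‖(Tn n - T) + T‖ := by rw [sub_add_cancel]
      _ ≤ ‖Tn n - T‖ + ‖T‖ := norm_add_le _ _
      _ ≤ 1 + ‖T‖ := by linarith
      _ = M := by rw [hM]; ring
  -- eventually aeval close
  have haeval : Tendsto (fun n => aeval (Tn n) q) atTop (nhds (aeval T q)) :=
    (q.continuous_aeval.tendsto T).comp htends
  have hev2 : ∀ᶠ n in atTop, ‖aeval (Tn n) q - aeval T q‖ < ε / 4 := by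
    have := tendsto_iff_norm_sub_tendsto_zero.mp haeval
    have := (Metric.tendsto_atTop.mp this) (ε / 4) (by linarith)
    obtain ⟨N, hN⟩ := this
    refine Filter.eventually_atTop.mpr ⟨N, fun n hn' => ?_⟩
    have := hN n hn'
    rwa [Real.dist_eq, sub_zero, abs_of_nonneg (norm_nonneg _)] at this
  have hTM : ‖T‖ ≤ M := by rw [hM]; linarith
  have hTclose : ‖cfc h T - aeval T q‖ ≤ ε / 4 :=
    cfc_close_to_poly h hh M (ε/4) (by linarith) q hq T hT hTM
  rw [Filter.eventually_atTop] at hev1 hev2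
  obtain ⟨N1, hN1⟩ := hev1
  obtain ⟨N2, hN2⟩ := hev2
  refine ⟨max N1 N2, fun n hn' => ?_⟩
  have h1 := hN1 n (le_trans (le_max_left _ _) hn')
  have h2 := hN2 n (le_trans (le_max_right _ _) hn')
  have h3 : ‖cfc h (Tn n) - aeval (Tn n) q‖ ≤ ε / 4 :=
    cfc_close_to_poly h hh M (ε/4) (by linarith) q hq (Tn n) (hn n) h1
  rw [Real.dist_eq, sub_zero, abs_of_nonneg (norm_nonneg _)]
  calc ‖cfc h (Tn n) - cfc h T‖
      = ‖(cfc h (Tn n) - aeval (Tn n) q) + (aeval (Tn n) q - aeval T q)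
          + (aeval T q - cfc h T)‖ := by congr 1; abel
    _ ≤ ‖(cfc h (Tn n) - aeval (Tn n) q) + (aeval (Tn n) q - aeval T q)‖
          + ‖aeval T q - cfc h T‖ := norm_add_le _ _
    _ ≤ ‖cfc h (Tn n) - aeval (Tn n) q‖ + ‖aeval (Tn n) q - aeval T q‖
          + ‖aeval T q - cfc h T‖ := by gcongr; exact norm_add_le _ _
    _ < ε := by rw [norm_sub_rev (aeval T q)]; linarith


lemma isGraphon_induced {n : ℕ} (B : Matrix (Fin n) (Fin n) ℝ) (hB : B.IsSymm) :
    IsGraphon (inducedGraphon B) := by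
  have hind : ∀ (s : Set ℝ) (u : ℝ), (0:ℝ) ≤ s.indicator (1 : ℝ → ℝ) u ∧ s.indicator (1 : ℝ → ℝ) u ≤ 1 := by
    intro s u
    unfold Set.indicator
    split <;> norm_num
  refine ⟨?_, ?_, ?_⟩
  · intro u v
    unfold inducedGraphon
    rw [Finset.sum_comm]
    refine Finset.sum_congr rfl fun i _ => Finset.sum_congr rfl fun j _ => ?_
    rw [← hB.apply i j]
    ring
  · unfold inducedGraphon Function.uncurry
    refine Finset.measurable_sum _ fun i _ => Finset.measurable_sum _ fun j _ => ?_
    refine Measurable.mul (Measurable.mul measurable_const ?_) ?_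
    · exact (measurable_one.indicator (part_meas n i)).comp measurable_fst
    · exact (measurable_one.indicator (part_meas n j)).comp measurable_snd
  · refine ⟨∑ i, ∑ j, |B i j|, fun u v => ?_⟩
    unfold inducedGraphon
    calc |∑ i, ∑ j, B i j * (part n i).indicator 1 u * (part n j).indicator 1 v|
        ≤ ∑ i, |∑ j, B i j * (part n i).indicator 1 u * (part n j).indicator 1 v| :=
          Finset.abs_sum_le_sum_abs _ _
      _ ≤ ∑ i, ∑ j, |B i j * (part n i).indicator 1 u * (part n j).indicator 1 v| := by
          gcongr with i _; exact Finset.abs_sum_le_sum_abs _ _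
      _ ≤ ∑ i, ∑ j, |B i j| := by
          refine Finset.sum_le_sum fun i _ => Finset.sum_le_sum fun j _ => ?_
          rw [abs_mul, abs_mul]
          calc |B i j| * |(part n i).indicator 1 u| * |(part n j).indicator 1 v|
              ≤ |B i j| * 1 * 1 := by
                gcongr
                · rw [abs_of_nonneg (hind _ _).1]; exact (hind _ _).2
                · rw [abs_of_nonneg (hind _ _).1]; exact (hind _ _).2
            _ = |B i j| := by ring

set_option maxHeartbeats 1000000 in
/-- If the graphon shift operators induced by symmetric matrices `A n` converge
in operator norm to the graphon shift operator of a graphon `W`, and `h : ℝ → ℝ` is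
continuous, then (1) `‖h(T_{W_{A n}}) − h(T_W)‖ → 0`, and (2) for signals `x n` with
`‖ψ_{x n} − ψ‖ → 0`, also `‖h(T_{W_{A n}})ψ_{x n} − h(T_W)ψ‖ → 0`. -/
theorem statement7 (A : (n : ℕ) → Matrix (Fin n) (Fin n) ℝ) (hA : ∀ n, (A n).IsSymm)
    (W : ℝ → ℝ → ℝ) (hW : IsGraphon W)
    (T : (n : ℕ) → L2 →L[ℂ] L2) (hT : ∀ n, IsGRSO (inducedGraphon (A n)) (T n))
    (TW : L2 →L[ℂ] L2) (hTW : IsGRSO W TW)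
    (hconv : Tendsto (fun n => ‖T n - TW‖) atTop (nhds 0))
    (h : ℝ → ℝ) (hh : Continuous h) :
    Tendsto (fun n => ‖cfc h (T n) - cfc h TW‖) atTop (nhds 0) ∧
    ∀ (x : (n : ℕ) → Fin n → ℂ) (ψ : L2),
      Tendsto (fun n => ‖inducedSignal (x n) - ψ‖) atTop (nhds 0) →
      Tendsto (fun n => ‖cfc h (T n) (inducedSignal (x n)) - cfc h TW ψ‖) atTop (nhds 0) := by
  have hsaTW : IsSelfAdjoint TW := isSelfAdjoint_of_isGRSO W hW TW hTW
  have hsaTn : ∀ n, IsSelfAdjoint (T n) := fun n =>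
    isSelfAdjoint_of_isGRSO _ (isGraphon_induced (A n) (hA n)) (T n) (hT n)
  have part1 : Tendsto (fun n => ‖cfc h (T n) - cfc h TW‖) atTop (nhds 0) :=
    cfc_tendsto_of_tendsto T TW hsaTn hsaTW hconv h hh
  refine ⟨part1, fun x ψ hx => ?_⟩
  set C0 : ℝ := ‖cfc h TW‖ with hC0
  have hg : Tendsto (fun n => (‖cfc h (T n) - cfc h TW‖ + C0) * ‖inducedSignal (x n) - ψ‖
      + ‖cfc h (T n) - cfc h TW‖ * ‖ψ‖) atTop (nhds 0) := by
    have hg1 : Tendsto (fun n => ‖cfc h (T n) - cfc h TW‖ + C0) atTop (nhds (0 + C0)) :=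
      part1.add (tendsto_const_nhds (x := C0))
    have hg2 := (hg1.mul hx).add (part1.mul (tendsto_const_nhds (x := ‖ψ‖)))
    simpa using hg2
  refine squeeze_zero (fun n => norm_nonneg _) (fun n => ?_) hg
  have key : cfc h (T n) (inducedSignal (x n)) - cfc h TW ψ
      = cfc h (T n) (inducedSignal (x n) - ψ) + (cfc h (T n) - cfc h TW) ψ := by
    rw [ContinuousLinearMap.sub_apply, map_sub]
    abel
  rw [key]
  calc ‖cfc h (T n) (inducedSignal (x n) - ψ) + (cfc h (T n) - cfc h TW) ψ‖
      ≤ ‖cfc h (T n) (inducedSignal (x n) - ψ)‖ + ‖(cfc h (T n) - cfc h TW) ψ‖ :=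
        norm_add_le _ _
    _ ≤ ‖cfc h (T n)‖ * ‖inducedSignal (x n) - ψ‖ + ‖cfc h (T n) - cfc h TW‖ * ‖ψ‖ :=
        add_le_add (ContinuousLinearMap.le_opNorm _ _) (ContinuousLinearMap.le_opNorm _ _)
    _ ≤ (‖cfc h (T n) - cfc h TW‖ + C0) * ‖inducedSignal (x n) - ψ‖
          + ‖cfc h (T n) - cfc h TW‖ * ‖ψ‖ := by
        gcongr
        calc ‖cfc h (T n)‖ = ‖(cfc h (T n) - cfc h TW) + cfc h TW‖ := by rw [sub_add_cancel]
          _ ≤ ‖cfc h (T n) - cfc h TW‖ + C0 := norm_add_le _ _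
end
end

section
/- Let (Δ_n)_{n∈ℕ} be a sequence of symmetric matrices Δ_n ∈ ℝ^{n×n} with GWMs A_n = n·Δ_n, and let W be a graphon such that ‖T_{W_{A_n}} − T_W‖_{L²[0,1]→L²[0,1]} → 0. Let h : ℝ → ℝ be continuous, and let (x_n)_n be signals x_n ∈ ℂⁿ and ψ ∈ L²[0,1] with ‖ψ_{x_n} − ψ‖_{L²[0,1]} → 0. Then for every ε > 0 there exists N such that for all n, m ≥ N, ‖ψ_{h(Δ_n)x_n} − ψ_{h(Δ_m)x_m}‖_{L²[0,1]} < ε. -/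
open MeasureTheory Filter

noncomputable section

namespace S9

local notation "⟪" x ", " y "⟫" => @inner ℂ _ _ x y

lemma npos {n : ℕ} (j : Fin n) : 0 < (n : ℝ) := by
  have := j.pos
  exact_mod_cast this

lemma part_subset (n : ℕ) (j : Fin n) : part n j ⊆ Set.Icc (0:ℝ) 1 := by
  intro t ht
  obtain ⟨h1, h2⟩ := ht
  have hn : (0:ℝ) < n := npos j
  refine ⟨le_trans (by positivity) h1, le_of_lt (lt_of_lt_of_le h2 ?_)⟩
  rw [div_le_one hn]
  have := j.isLt
  push_cast
  exact_mod_cast Nat.succ_le_of_lt this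

lemma measure_part (n : ℕ) (j : Fin n) : μ01 (part n j) = ENNReal.ofReal (1 / n) := by
  rw [Measure.restrict_apply (part_meas n j),
    Set.inter_eq_self_of_subset_left (part_subset n j)]
  unfold part
  rw [Real.volume_Ico]
  rw [div_sub_div_same, add_sub_cancel_left]

lemma measure_part_toReal (n : ℕ) (j : Fin n) : (μ01 (part n j)).toReal = 1 / n := by
  rw [measure_part]
  exact ENNReal.toReal_ofReal (by positivity)

lemma part_disjoint {n : ℕ} {i j : Fin n} (hij : i ≠ j) : part n i ∩ part n j = ∅ := by
  unfold part
  rw [Set.Ico_inter_Ico]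
  apply Set.Ico_eq_empty
  intro hlt
  have hn := npos i
  have hmm : (((i:ℝ)+1)/n) ⊓ (((j:ℝ)+1)/n) ≤ ((i:ℝ)/n) ⊔ ((j:ℝ)/n) := by
    rcases lt_or_gt_of_ne hij with hc | hc
    · refine min_le_of_left_le (le_trans ?_ (le_max_right _ _))
      gcongr
      exact_mod_cast Nat.succ_le_of_lt hc
    · refine min_le_of_right_le (le_trans ?_ (le_max_left _ _))
      gcongr
      exact_mod_cast Nat.succ_le_of_lt hc
  exact absurd hlt (not_lt.mpr hmm)

def chi (n : ℕ) (j : Fin n) : L2 :=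
  indicatorConstLp 2 (part_meas n j) (part_ne_top n j) (1 : ℂ)

lemma indicatorConstLp_smul' {n : ℕ} (j : Fin n) (c : ℂ) :
    indicatorConstLp 2 (part_meas n j) (part_ne_top n j) c = c • chi n j := by
  refine Lp.ext ?_
  filter_upwards [indicatorConstLp_coeFn (p := 2) (hs := part_meas n j)
      (hμs := part_ne_top n j) (c := c),
    Lp.coeFn_smul c (chi n j),
    indicatorConstLp_coeFn (p := 2) (hs := part_meas n j)
      (hμs := part_ne_top n j) (c := (1:ℂ))] with v h1 h2 h3
  rw [h1, h2]
  simp only [Pi.smul_apply, chi]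
  rw [h3]
  by_cases hv : v ∈ part n j <;>
    simp [Set.indicator_of_mem, Set.indicator_of_notMem, hv]

lemma inducedSignal_eq {n : ℕ} (x : Fin n → ℂ) :
    inducedSignal x = ∑ j, x j • chi n j := by
  unfold inducedSignal
  exact Finset.sum_congr rfl fun j _ => indicatorConstLp_smul' j (x j)

lemma inner_chi {n : ℕ} (j : Fin n) (f : L2) :
    @inner ℂ _ _ (chi n j) f = ∫ v in part n j, f v ∂μ01 :=
  L2.inner_indicatorConstLp_one (part_meas n j) (part_ne_top n j) f

lemma inner_chi_chi {n : ℕ} (i j : Fin n) :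
    @inner ℂ _ _ (chi n i) (chi n j) = if i = j then (1 / n : ℂ) else 0 := by
  rw [inner_chi]
  have hcongr : ∫ v in part n i, (chi n j) v ∂μ01
      = ∫ v in part n i, (part n j).indicator (fun _ => (1:ℂ)) v ∂μ01 := by
    refine integral_congr_ae (ae_restrict_of_ae ?_)
    filter_upwards [indicatorConstLp_coeFn (p := 2) (hs := part_meas n j)
      (hμs := part_ne_top n j) (c := (1:ℂ))] with v hv
    simp only [chi]
    rw [hv]
  rw [hcongr, setIntegral_indicator (part_meas n j), setIntegral_const]
  by_cases hij : i = j
  · subst hij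
    rw [if_pos rfl, Set.inter_self, measureReal_def, measure_part_toReal, Complex.real_smul]
    push_cast
    ring
  · rw [if_neg hij, part_disjoint hij]
    simp

lemma inner_chi_inducedSignal {n : ℕ} (j : Fin n) (x : Fin n → ℂ) :
    @inner ℂ _ _ (chi n j) (inducedSignal x) = x j / n := by
  rw [inducedSignal_eq, inner_sum]
  have : ∀ i ∈ Finset.univ, @inner ℂ _ _ (chi n j) (x i • chi n i)
      = if i = j then x j * (1/n) else 0 := by
    intro i _
    rw [inner_smul_right, inner_chi_chi]
    by_cases hij : j = i
    · subst hij; simp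
    · simp [hij, Ne.symm hij]
  rw [Finset.sum_congr rfl this, Finset.sum_ite_eq' Finset.univ j fun _ => x j * (1/n)]
  simp [div_eq_mul_inv]

lemma inner_inducedSignal_left {n : ℕ} (y : Fin n → ℂ) (g : L2) :
    @inner ℂ _ _ (inducedSignal y) g
      = ∑ i, (starRingEnd ℂ) (y i) * @inner ℂ _ _ (chi n i) g := by
  rw [inducedSignal_eq, sum_inner]
  exact Finset.sum_congr rfl fun i _ => inner_smul_left _ _ _


/-- `inducedSignal` as a linear map. -/
def iotaL (n : ℕ) : (Fin n → ℂ) →ₗ[ℂ] L2 where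
  toFun := inducedSignal
  map_add' x y := by
    simp only [inducedSignal_eq, add_smul, Finset.sum_add_distrib, Pi.add_apply]
  map_smul' c x := by
    simp only [inducedSignal_eq, RingHom.id_apply, Finset.smul_sum, Pi.smul_apply,
      smul_smul, smul_eq_mul]

def iotaCLM (n : ℕ) : (Fin n → ℂ) →L[ℂ] L2 := (iotaL n).toContinuousLinearMap

def piCLM (n : ℕ) : L2 →L[ℂ] (Fin n → ℂ) :=
  ContinuousLinearMap.pi fun j => (n : ℂ) • innerSL ℂ (chi n j)

lemma piCLM_apply {n : ℕ} (f : L2) (j : Fin n) :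
    piCLM n f j = (n : ℂ) * @inner ℂ _ _ (chi n j) f := rfl

lemma iotaCLM_apply {n : ℕ} (x : Fin n → ℂ) : iotaCLM n x = inducedSignal x := rfl

lemma piCLM_inducedSignal {n : ℕ} (x : Fin n → ℂ) : piCLM n (inducedSignal x) = x := by
  funext j
  rw [piCLM_apply, inner_chi_inducedSignal]
  have hn : (n : ℂ) ≠ 0 := Nat.cast_ne_zero.mpr j.pos.ne'
  field_simp

/-- The operator on `L²[0,1]` induced by an `n × n` complex matrix. -/
def Phi (n : ℕ) (M : Matrix (Fin n) (Fin n) ℂ) : L2 →L[ℂ] L2 :=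
  iotaCLM n ∘L (Matrix.mulVecLin M).toContinuousLinearMap ∘L piCLM n

lemma Phi_apply {n : ℕ} (M : Matrix (Fin n) (Fin n) ℂ) (f : L2) :
    Phi n M f = inducedSignal (M.mulVec (piCLM n f)) := rfl

lemma Phi_inducedSignal {n : ℕ} (M : Matrix (Fin n) (Fin n) ℂ) (x : Fin n → ℂ) :
    Phi n M (inducedSignal x) = inducedSignal (M.mulVec x) := by
  rw [Phi_apply, piCLM_inducedSignal]

lemma inner_Phi {n : ℕ} (M : Matrix (Fin n) (Fin n) ℂ) (f g : L2) :
    @inner ℂ _ _ (Phi n M f) g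
      = ∑ i, ∑ j, (starRingEnd ℂ) (M i j) * (starRingEnd ℂ) ((n:ℂ) * @inner ℂ _ _ (chi n j) f)
          * @inner ℂ _ _ (chi n i) g := by
  rw [Phi_apply, inner_inducedSignal_left]
  refine Finset.sum_congr rfl fun i _ => ?_
  simp only [Matrix.mulVec, dotProduct, piCLM_apply, map_sum, Finset.sum_mul]
  refine Finset.sum_congr rfl fun j _ => ?_
  simp only [map_mul]

lemma Phi_star {n : ℕ} (M : Matrix (Fin n) (Fin n) ℂ) :
    Phi n (Matrix.conjTranspose M) = star (Phi n M) := by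
  rw [ContinuousLinearMap.star_eq_adjoint]
  rw [ContinuousLinearMap.eq_adjoint_iff]
  intro f g
  rw [inner_Phi]
  have : @inner ℂ _ _ f (Phi n M g) = (starRingEnd ℂ) (@inner ℂ _ _ (Phi n M g) f) :=
    (inner_conj_symm _ _).symm
  rw [this, inner_Phi, map_sum]
  rw [Finset.sum_comm]
  refine Finset.sum_congr rfl fun i _ => ?_
  rw [map_sum]
  refine Finset.sum_congr rfl fun j _ => ?_
  simp only [Matrix.conjTranspose_apply, map_mul, ← starRingEnd_apply, Complex.conj_conj,
    Complex.conj_natCast]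
  ring

def PhiHom (n : ℕ) : Matrix (Fin n) (Fin n) ℂ →⋆ₙₐ[ℂ] (L2 →L[ℂ] L2) where
  toFun := Phi n
  map_add' M N := by
    refine ContinuousLinearMap.ext fun f => ?_
    rw [ContinuousLinearMap.add_apply, Phi_apply, Phi_apply, Phi_apply, Matrix.add_mulVec]
    exact map_add (iotaL n) _ _
  map_smul' c M := by
    refine ContinuousLinearMap.ext fun f => ?_
    simp only [MonoidHom.id_apply, ContinuousLinearMap.smul_apply]
    rw [Phi_apply, Phi_apply, Matrix.smul_mulVec]
    exact map_smul (iotaL n) _ _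
  map_zero' := by
    refine ContinuousLinearMap.ext fun f => ?_
    rw [ContinuousLinearMap.zero_apply, Phi_apply, Matrix.zero_mulVec]
    exact map_zero (iotaL n)
  map_mul' M N := by
    refine ContinuousLinearMap.ext fun f => ?_
    show Phi n (M * N) f = Phi n M (Phi n N f)
    rw [Phi_apply (M := N), Phi_inducedSignal, Phi_apply, Matrix.mulVec_mulVec]
  map_star' M := Phi_star M

lemma PhiHom_continuous (n : ℕ) : Continuous (PhiHom n) :=
  LinearMap.continuous_of_finiteDimensional
    (LinearMap.mk (AddHom.mk (PhiHom n) (map_add (PhiHom n))) (map_smul (PhiHom n)))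

lemma Lp_coeFn_sum {ι : Type*} (s : Finset ι) (f : ι → L2) :
    ⇑(∑ i ∈ s, f i) =ᵐ[μ01] fun v => ∑ i ∈ s, f i v := by
  classical
  induction s using Finset.induction with
  | empty => simp only [Finset.sum_empty]; exact Lp.coeFn_zero ℂ 2 μ01
  | insert a s' hns ih =>
    rw [Finset.sum_insert hns]
    filter_upwards [Lp.coeFn_add (f a) (∑ i ∈ s', f i), ih] with v h1 h2
    rw [h1]
    simp only [Pi.add_apply, h2, Finset.sum_insert hns]

lemma coeFn_inducedSignal {n : ℕ} (y : Fin n → ℂ) :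
    ⇑(inducedSignal y) =ᵐ[μ01]
      fun v => ∑ j, (part n j).indicator (fun _ => y j) v := by
  unfold inducedSignal
  filter_upwards [Lp_coeFn_sum Finset.univ (fun j : Fin n =>
      indicatorConstLp 2 (part_meas n j) (part_ne_top n j) (y j)),
    eventually_countable_forall.mpr (fun j : Fin n =>
      indicatorConstLp_coeFn (p := 2) (hs := part_meas n j)
        (hμs := part_ne_top n j) (c := y j))] with v h1 h2
  rw [h1]
  exact Finset.sum_congr rfl fun j _ => h2 j

lemma integrable_L2 (f : L2) : Integrable (⇑f) μ01 :=
  (Lp.memLp f).integrable (by norm_num)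

lemma indicator_cast_mul {n : ℕ} (j : Fin n) (f : L2) (u : ℝ) :
    (((part n j).indicator (1 : ℝ → ℝ) u : ℝ) : ℂ) * f u
      = (part n j).indicator (⇑f) u := by
  by_cases hu : u ∈ part n j <;>
    simp [Set.indicator_of_mem, Set.indicator_of_notMem, hu]

/-- The GRSO of the induced graphon of the weight matrix `n • Δ` is `Phi` of
the complexified `Δ`. -/
lemma TA_eq {n : ℕ} (Δn : Matrix (Fin n) (Fin n) ℝ) (T : L2 →L[ℂ] L2)
    (hT : IsGRSO (inducedGraphon ((n : ℝ) • Δn)) T) :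
    T = PhiHom n (Δn.map Complex.ofReal) := by
  refine ContinuousLinearMap.ext fun f => ?_
  refine Lp.ext ?_
  have hint : ∀ v : ℝ, (∫ u, ((inducedGraphon ((n : ℝ) • Δn) v u : ℝ) : ℂ) * f u ∂μ01)
      = ∑ i, (part n i).indicator
          (fun _ => ((Δn.map Complex.ofReal).mulVec (piCLM n f)) i) v := by
    intro v
    have hexp : ∀ u : ℝ, ((inducedGraphon ((n : ℝ) • Δn) v u : ℝ) : ℂ) * f u
        = ∑ i, ∑ j, ((((n : ℝ) * Δn i j * (part n i).indicator 1 v : ℝ)) : ℂ) *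
            (part n j).indicator (⇑f) u := by
      intro u
      unfold inducedGraphon
      push_cast
      rw [Finset.sum_mul]
      refine Finset.sum_congr rfl fun i _ => ?_
      rw [Finset.sum_mul]
      refine Finset.sum_congr rfl fun j _ => ?_
      rw [← indicator_cast_mul j f u]
      push_cast
      simp only [Matrix.smul_apply, smul_eq_mul]
      push_cast
      ring
    rw [integral_congr_ae (Filter.Eventually.of_forall hexp)]
    rw [integral_finset_sum _ (fun i _ => integrable_finset_sum _ (fun j _ =>
      ((integrable_L2 f).indicator (part_meas n j)).const_mul _))]
    refine Finset.sum_congr rfl fun i _ => ?_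
    rw [integral_finset_sum _ (fun j _ =>
      ((integrable_L2 f).indicator (part_meas n j)).const_mul _)]
    have hterm : ∀ j : Fin n, (∫ u, ((((n : ℝ) * Δn i j * (part n i).indicator 1 v : ℝ)) : ℂ) *
        (part n j).indicator (⇑f) u ∂μ01)
        = ((((n : ℝ) * Δn i j * (part n i).indicator 1 v : ℝ)) : ℂ) *
            @inner ℂ _ _ (chi n j) f := by
      intro j
      rw [integral_const_mul, inner_chi, integral_indicator (part_meas n j)]
    rw [Finset.sum_congr rfl fun j _ => hterm j]
    by_cases hv : v ∈ part n i
    · rw [Set.indicator_of_mem hv]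
      simp only [Set.indicator_of_mem hv, Pi.one_apply]
      simp only [Matrix.mulVec, dotProduct, Matrix.map_apply, piCLM_apply]
      refine Finset.sum_congr rfl fun j _ => ?_
      push_cast
      ring
    · rw [Set.indicator_of_notMem hv]
      simp only [Set.indicator_of_notMem hv, Pi.one_apply]
      refine Finset.sum_eq_zero fun j _ => ?_
      push_cast
      ring
  filter_upwards [hT f, coeFn_inducedSignal ((Δn.map Complex.ofReal).mulVec (piCLM n f))]
    with v h1 h2
  rw [h1, hint v]
  exact (h2.symm).symm ▸ h2.symm ▸ rfl

/-- Entrywise complexification of real matrices, as a star algebra homomorphism. -/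
def ofRealSAH (n : ℕ) : Matrix (Fin n) (Fin n) ℝ →⋆ₐ[ℝ] Matrix (Fin n) (Fin n) ℂ :=
  { (Complex.ofRealAm.mapMatrix :
      Matrix (Fin n) (Fin n) ℝ →ₐ[ℝ] Matrix (Fin n) (Fin n) ℂ) with
    map_star' := fun A => by
      ext i j
      simp [Matrix.conjTranspose_apply, Matrix.star_eq_conjTranspose, Complex.conj_ofReal] }

lemma ofRealSAH_apply {n : ℕ} (A : Matrix (Fin n) (Fin n) ℝ) :
    ofRealSAH n A = A.map Complex.ofReal := rfl

lemma ofRealSAH_continuous (n : ℕ) : Continuous (ofRealSAH n) :=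
  by have := LinearMap.continuous_of_finiteDimensional ((ofRealSAH n).toAlgHom.toLinearMap)
     exact this

lemma isSelfAdjoint_of_isSymm {n : ℕ} {A : Matrix (Fin n) (Fin n) ℝ} (hA : A.IsSymm) :
    IsSelfAdjoint A := by
  rw [IsSelfAdjoint, Matrix.star_eq_conjTranspose]
  ext i j
  rw [Matrix.conjTranspose_apply, star_trivial]
  exact congrFun (congrFun hA j) i |>.trans rfl |>.symm ▸ (by
    have := congrFun (congrFun hA i) j
    simpa [Matrix.transpose_apply] using this)

lemma isSelfAdjoint_map {n : ℕ} {A : Matrix (Fin n) (Fin n) ℝ} (hA : A.IsSymm) :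
    IsSelfAdjoint (A.map Complex.ofReal) := by
  rw [IsSelfAdjoint, ← ofRealSAH_apply, ← map_star]
  rw [(isSelfAdjoint_of_isSymm hA).star_eq]

lemma compact_quasispectrum {n : ℕ} (M : Matrix (Fin n) (Fin n) ℂ) :
    CompactSpace (quasispectrum ℝ M) := by
  have hfin : (quasispectrum ℝ M).Finite := by
    rw [quasispectrum_eq_spectrum_union_zero]
    exact Matrix.finite_real_spectrum.union (Set.finite_singleton 0)
  haveI := hfin.to_subtype
  exact Finite.compactSpace

lemma cfc_matrix_complexify {n : ℕ} (A : Matrix (Fin n) (Fin n) ℝ) (hA : A.IsSymm)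
    (h : ℝ → ℝ) (hh : Continuous h) :
    (cfc h A).map Complex.ofReal = cfc h (A.map Complex.ofReal) := by
  have := StarAlgHom.map_cfc (ofRealSAH n) h A (hf := hh.continuousOn)
    (hφ := ofRealSAH_continuous n) (ha := isSelfAdjoint_of_isSymm hA)
    (hφa := isSelfAdjoint_map hA)
  rw [← ofRealSAH_apply, this, ofRealSAH_apply]

lemma cfc_decomp_matrix {n : ℕ} (M : Matrix (Fin n) (Fin n) ℂ) (hM : IsSelfAdjoint M)
    (h : ℝ → ℝ) (hh : Continuous h) :
    cfc h M = cfcₙ (fun t => h t - h 0) M + h 0 • 1 := by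
  haveI := compact_quasispectrum (n := n)
  letI : NormedRing (Matrix (Fin n) (Fin n) ℂ) := Matrix.linftyOpNormedRing
  letI : NormedAlgebra ℝ (Matrix (Fin n) (Fin n) ℂ) := Matrix.linftyOpNormedAlgebra
  haveI : ContinuousMapZero.UniqueHom ℝ (Matrix (Fin n) (Fin n) ℂ) :=
    RCLike.uniqueNonUnitalContinuousFunctionalCalculus
  rw [cfcₙ_eq_cfc (show ContinuousOn (fun t => h t - h 0) _ from
    (hh.sub continuous_const).continuousOn) (by simp)]
  conv_lhs => rw [show h = (fun t => (h t - h 0) + h 0) from funext fun t => by ring]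
  rw [cfc_add M _ _ (show ContinuousOn (fun t => h t - h 0) _ from
    (hh.sub continuous_const).continuousOn) continuousOn_const,
    cfc_const (h 0) M hM, Algebra.algebraMap_eq_smul_one]

lemma cfc_decomp_op (T : L2 →L[ℂ] L2) (hT : IsSelfAdjoint T)
    (h : ℝ → ℝ) (hh : Continuous h) :
    cfc h T = cfcₙ (fun t => h t - h 0) T + h 0 • 1 := by
  rw [cfcₙ_eq_cfc (show ContinuousOn (fun t => h t - h 0) _ from
    (hh.sub continuous_const).continuousOn) (by simp)]
  conv_lhs => rw [show h = (fun t => (h t - h 0) + h 0) from funext fun t => by ring]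
  rw [cfc_add T _ _ (show ContinuousOn (fun t => h t - h 0) _ from
    (hh.sub continuous_const).continuousOn) continuousOn_const,
    cfc_const (h 0) T hT, Algebra.algebraMap_eq_smul_one]

lemma PhiHom_selfAdjoint {n : ℕ} {M : Matrix (Fin n) (Fin n) ℂ} (hM : IsSelfAdjoint M) :
    IsSelfAdjoint (PhiHom n M) := by
  rw [IsSelfAdjoint, ← map_star (PhiHom n) M, hM.star_eq]

lemma PhiHom_cfcn {n : ℕ} (M : Matrix (Fin n) (Fin n) ℂ) (hM : IsSelfAdjoint M)
    (h0 : ℝ → ℝ) (hh0 : Continuous h0) (h00 : h0 0 = 0) :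
    PhiHom n (cfcₙ h0 M) = cfcₙ h0 (PhiHom n M) := by
  haveI := compact_quasispectrum M
  exact NonUnitalStarAlgHom.map_cfcₙ (PhiHom n) h0 M (hf := hh0.continuousOn)
    (hf₀ := h00) (hφ := PhiHom_continuous n) (ha := hM) (hφa := PhiHom_selfAdjoint hM)

lemma key {n : ℕ} (Δn : Matrix (Fin n) (Fin n) ℝ) (hs : Δn.IsSymm) (T : L2 →L[ℂ] L2)
    (hT : IsGRSO (inducedGraphon ((n : ℝ) • Δn)) T) (h : ℝ → ℝ) (hh : Continuous h)
    (x : Fin n → ℂ) :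
    inducedSignal (((cfc h Δn).map Complex.ofReal).mulVec x)
      = cfc h T (inducedSignal x) := by
  set M := Δn.map Complex.ofReal with hMdef
  have hTA : T = PhiHom n M := TA_eq Δn T hT
  have hMsa : IsSelfAdjoint M := isSelfAdjoint_map hs
  have hTsa : IsSelfAdjoint T := by rw [hTA]; exact PhiHom_selfAdjoint hMsa
  set h0 := fun t : ℝ => h t - h 0 with hh0def
  have hh0 : Continuous h0 := hh.sub continuous_const
  have h00 : h0 0 = 0 := by simp [hh0def]
  have hmap : (cfc h Δn).map Complex.ofReal = cfc h M := cfc_matrix_complexify Δn hs h hh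
  have d1 : cfc h M = cfcₙ h0 M + h 0 • 1 := cfc_decomp_matrix M hMsa h hh
  have d2 : cfc h T = cfcₙ h0 T + h 0 • 1 := cfc_decomp_op T hTsa h hh
  rw [hmap, d1, d2, Matrix.add_mulVec, Matrix.smul_mulVec, Matrix.one_mulVec]
  rw [ContinuousLinearMap.add_apply]
  have hsm1 : (h 0 : ℝ) • x = ((h 0 : ℝ) : ℂ) • x := by
    rw [← algebraMap_smul (R := ℝ) ℂ (h 0) x, Complex.coe_algebraMap]
  have hsm2 : (h 0 : ℝ) • (inducedSignal x) = ((h 0 : ℝ) : ℂ) • inducedSignal x := by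
    rw [← algebraMap_smul (R := ℝ) ℂ (h 0) (inducedSignal x), Complex.coe_algebraMap]
  have e1 : inducedSignal ((cfcₙ h0 M).mulVec x + (h 0:ℝ) • x)
      = inducedSignal ((cfcₙ h0 M).mulVec x) + ((h 0 : ℝ) : ℂ) • inducedSignal x := by
    rw [hsm1, show ∀ a b : Fin n → ℂ, inducedSignal (a + b)
      = inducedSignal a + inducedSignal b from fun a b => map_add (iotaL n) a b]
    congr 1
    exact map_smul (iotaL n) _ _
  have e2 : ((h 0 : ℝ) : ℂ) • inducedSignal x
      = ((h 0 : ℝ) • (1 : L2 →L[ℂ] L2)) (inducedSignal x) := by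
    rw [ContinuousLinearMap.smul_apply, ContinuousLinearMap.one_apply, hsm2]
  rw [e1, e2]
  congr 1
  rw [hTA, ← PhiHom_cfcn M hMsa h0 hh0 h00]
  exact (Phi_inducedSignal _ x).symm

instance : Nontrivial L2 := by
  refine ⟨chi 1 0, 0, fun hc => ?_⟩
  have h0 := inner_chi_chi (n := 1) 0 0
  rw [hc] at h0
  simp at h0

lemma spec_abs_le (T : L2 →L[ℂ] L2) {t : ℝ} (ht : t ∈ spectrum ℝ T) : |t| ≤ ‖T‖ := by
  have h2 : (algebraMap ℝ ℂ t) ∈ spectrum ℂ T := spectrum.algebraMap_mem ℂ ht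
  have h3 := spectrum.norm_le_norm_of_mem h2
  simpa using h3

lemma cfc_poly_eq (p : Polynomial ℝ) (T : L2 →L[ℂ] L2) (hT : IsSelfAdjoint T) :
    cfc (fun t => Polynomial.eval t p) T
      = ∑ k ∈ Finset.range (p.natDegree + 1), p.coeff k • T ^ k := by
  have h1 : (fun t : ℝ => Polynomial.eval t p)
      = ∑ k ∈ Finset.range (p.natDegree + 1), (fun t : ℝ => p.coeff k * t ^ k) := by
    funext t
    rw [Finset.sum_apply]
    exact Polynomial.eval_eq_sum_range t
  rw [h1, cfc_sum _ T _ (fun i _ => (show Continuous (fun t : ℝ => p.coeff i * t ^ i) from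
    continuous_const.mul (continuous_pow i)).continuousOn)]
  refine Finset.sum_congr rfl fun k _ => ?_
  rw [cfc_const_mul _ _ T ((continuous_pow k).continuousOn), cfc_pow_id T k]

lemma cfc_poly_near {R ε : ℝ} (hε : 0 < ε) (h : ℝ → ℝ) (hh : Continuous h)
    (p : Polynomial ℝ)
    (hp : ∀ t ∈ Set.Icc (-R) R, |Polynomial.eval t p - h t| < ε)
    (T : L2 →L[ℂ] L2) (hT : IsSelfAdjoint T) (hTn : ‖T‖ ≤ R) :
    ‖cfc h T - ∑ k ∈ Finset.range (p.natDegree + 1), p.coeff k • T ^ k‖ ≤ ε := by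
  rw [← cfc_poly_eq p T hT,
    ← cfc_sub h (fun t => Polynomial.eval t p) T hh.continuousOn
      (Polynomial.continuous_aeval p).continuousOn]
  refine norm_cfc_le hε.le fun t ht => ?_
  have habs : |t| ≤ R := (spec_abs_le T ht).trans hTn
  have := hp t ⟨(abs_le.mp habs).1, (abs_le.mp habs).2⟩
  rw [Real.norm_eq_abs, abs_sub_comm]
  exact this.le

lemma cauchy_cfc (h : ℝ → ℝ) (hh : Continuous h) (TA : ℕ → L2 →L[ℂ] L2)
    (hsa : ∀ n, IsSelfAdjoint (TA n)) (TW : L2 →L[ℂ] L2)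
    (hconv : Tendsto TA atTop (nhds TW)) :
    CauchySeq (fun n => cfc h (TA n)) := by
  rw [Metric.cauchySeq_iff]
  intro ε hε
  set R : ℝ := ‖TW‖ + 1 with hRdef
  obtain ⟨p, hp⟩ := exists_polynomial_near_of_continuousOn (-R) R h hh.continuousOn
    (ε / 4) (by positivity)
  set q : (L2 →L[ℂ] L2) → (L2 →L[ℂ] L2) :=
    fun a => ∑ k ∈ Finset.range (p.natDegree + 1), p.coeff k • a ^ k with hqdef
  have hqc : Continuous q := by
    refine continuous_finset_sum _ fun k _ => ?_
    exact ((continuous_pow (M := L2 →L[ℂ] L2) k)).const_smul (p.coeff k)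
  have hq : CauchySeq (fun n => q (TA n)) :=
    (((hqc.tendsto TW).comp hconv)).cauchySeq
  rw [Metric.cauchySeq_iff] at hq
  obtain ⟨N1, hN1⟩ := hq (ε / 4) (by positivity)
  have hbnd : ∀ᶠ n in atTop, ‖TA n‖ ≤ R := by
    have := Metric.tendsto_atTop.mp hconv 1 one_pos
    obtain ⟨N2, hN2⟩ := this
    refine eventually_atTop.mpr ⟨N2, fun n hn => ?_⟩
    have h1 := hN2 n hn
    rw [dist_eq_norm] at h1
    calc ‖TA n‖ = ‖TA n - TW + TW‖ := by rw [sub_add_cancel]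
      _ ≤ ‖TA n - TW‖ + ‖TW‖ := norm_add_le _ _
      _ ≤ 1 + ‖TW‖ := by linarith
      _ = R := by rw [hRdef]; ring
  obtain ⟨N2, hN2⟩ := eventually_atTop.mp hbnd
  refine ⟨max N1 N2, fun m hm n hn => ?_⟩
  have hm1 := le_of_max_le_left hm
  have hm2 := le_of_max_le_right hm
  have hn1 := le_of_max_le_left hn
  have hn2 := le_of_max_le_right hn
  have e1 := cfc_poly_near (by positivity : (0:ℝ) < ε/4) h hh p hp (TA m) (hsa m) (hN2 m hm2)
  have e2 := cfc_poly_near (by positivity : (0:ℝ) < ε/4) h hh p hp (TA n) (hsa n) (hN2 n hn2)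
  have e3 := hN1 m hm1 n hn1
  rw [dist_eq_norm] at e3 ⊢
  calc ‖cfc h (TA m) - cfc h (TA n)‖
      = ‖(cfc h (TA m) - q (TA m)) + (q (TA m) - q (TA n)) + (q (TA n) - cfc h (TA n))‖ := by
        congr 1; abel
    _ ≤ ‖(cfc h (TA m) - q (TA m)) + (q (TA m) - q (TA n))‖ + ‖q (TA n) - cfc h (TA n)‖ :=
        norm_add_le _ _
    _ ≤ ‖cfc h (TA m) - q (TA m)‖ + ‖q (TA m) - q (TA n)‖ + ‖q (TA n) - cfc h (TA n)‖ := by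
        gcongr; exact norm_add_le _ _
    _ < ε := by
        rw [norm_sub_rev (q (TA n))]
        have := e1
        have := e2
        linarith

end S9

/-- If the graphon shift operators induced by the GWMs `A n = n·Δ n` converge
in operator norm to `T_W`, `h : ℝ → ℝ` is continuous, and signals `x n` satisfy
`‖ψ_{x n} − ψ‖ → 0`, then the induced filter outputs `ψ_{h(Δ n) x n}` form a Cauchy
sequence in `L²[0,1]`. -/
theorem statement9 (Δ : (n : ℕ) → Matrix (Fin n) (Fin n) ℝ) (hΔ : ∀ n, (Δ n).IsSymm)
    (W : ℝ → ℝ → ℝ) (hW : IsGraphon W)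
    (TA : (n : ℕ) → L2 →L[ℂ] L2)
    (hTA : ∀ n : ℕ, IsGRSO (inducedGraphon ((n : ℝ) • Δ n)) (TA n))
    (TW : L2 →L[ℂ] L2) (hTW : IsGRSO W TW)
    (hconv : Tendsto (fun n => ‖TA n - TW‖) atTop (nhds 0))
    (h : ℝ → ℝ) (hh : Continuous h)
    (x : (n : ℕ) → Fin n → ℂ) (ψ : L2)
    (hx : Tendsto (fun n => ‖inducedSignal (x n) - ψ‖) atTop (nhds 0)) :
    ∀ ε > 0, ∃ N, ∀ n ≥ N, ∀ m ≥ N,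
      ‖inducedSignal (((cfc h (Δ n)).map Complex.ofReal).mulVec (x n)) -
        inducedSignal (((cfc h (Δ m)).map Complex.ofReal).mulVec (x m))‖ < ε := by
  intro ε hε
  have hTconv : Tendsto TA atTop (nhds TW) :=
    tendsto_iff_norm_sub_tendsto_zero.mpr hconv
  have hψ : Tendsto (fun n => inducedSignal (x n)) atTop (nhds ψ) :=
    tendsto_iff_norm_sub_tendsto_zero.mpr hx
  have hsa : ∀ n, IsSelfAdjoint (TA n) := fun n => by
    rw [S9.TA_eq (Δ n) (TA n) (hTA n)]
    exact S9.PhiHom_selfAdjoint (S9.isSelfAdjoint_map (hΔ n))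
  have hS : CauchySeq (fun n => cfc h (TA n)) := S9.cauchy_cfc h hh TA hsa TW hTconv
  obtain ⟨S, hSlim⟩ := cauchySeq_tendsto_of_complete hS
  have hpair : Tendsto (fun n => (cfc h (TA n), inducedSignal (x n))) atTop
      (nhds (S, ψ)) := hSlim.prodMk_nhds hψ
  have happ : Tendsto (fun n => cfc h (TA n) (inducedSignal (x n))) atTop (nhds (S ψ)) :=
    ((isBoundedBilinearMap_apply (𝕜 := ℂ) (E := L2) (F := L2)).continuous.tendsto
      (S, ψ)).comp hpair
  have hc := happ.cauchySeq
  rw [Metric.cauchySeq_iff] at hc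
  obtain ⟨N, hN⟩ := hc ε hε
  refine ⟨N, fun n hn m hm => ?_⟩
  rw [S9.key (Δ n) (hΔ n) (TA n) (hTA n) h hh (x n),
    S9.key (Δ m) (hΔ m) (TA m) (hTA m) h hh (x m), ← dist_eq_norm]
  exact hN n hn m hm
end
end
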